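/- arXiv:2505.01971 — 2 statements merged into one kernel-verified Lean document; each statement's English description precedes it below -/
import Mathlib

section
/- Let X^(1), …, X^(m) be random vectors in ℝ^n, each taking finitely many values, on a common probability space, and set S_i^(k) = Σ_{ν=1}^k X_i^(ν) with S^(0) = 0. Assume: (i) for each k, conditionally on S^(k−1), the vector X^(k) is negatively associated (i.e., for every value s of S^(k−1) with positive probability, the conditional law of X^(k) given S^(k−1)=s is NA); (ii) for each k and each I ⊆ {1,…,n}, the conditional distribution of X_I^(k) given S^(k−1) coincides with its conditional distribution given S_I^(k−1) (it depends only on S_I^(k−1)); (iii) for each k and each I ⊆ {1,…,n}, the conditional law of X_I^(k) given S_I^(k−1) = s_I is stochastically increasing in s_I. Then S^(k) = (S_1^(k), …, S_n^(k)) is negatively associated for every k ∈ {1,…,m}. -/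
open MeasureTheory ProbabilityTheory
open scoped Classical

noncomputable section

/-- A random vector `X = (X_1,…,X_n)` is negatively associated (NA) under the
probability measure `μ`: for disjoint `A₁, A₂ ⊆ {1,…,n}` and bounded coordinatewise
increasing `ψ₁, ψ₂`, `Cov(ψ₁(X_{A₁}), ψ₂(X_{A₂})) ≤ 0`, i.e.
`E[ψ₁(X_{A₁}) ψ₂(X_{A₂})] ≤ E[ψ₁(X_{A₁})] E[ψ₂(X_{A₂})]`. -/
def IsNA {Ω : Type*} [MeasurableSpace Ω] (μ : Measure Ω) {n : ℕ}
    (X : Ω → Fin n → ℝ) : Prop :=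
  ∀ A₁ A₂ : Finset (Fin n), Disjoint A₁ A₂ →
    ∀ ψ₁ : ({i : Fin n // i ∈ A₁} → ℝ) → ℝ, ∀ ψ₂ : ({i : Fin n // i ∈ A₂} → ℝ) → ℝ,
      Monotone ψ₁ → Monotone ψ₂ → (∃ C, ∀ v, |ψ₁ v| ≤ C) → (∃ C, ∀ v, |ψ₂ v| ≤ C) →
      ∫ ω, (ψ₁ fun i => X ω i.1) * (ψ₂ fun i => X ω i.1) ∂μ
        ≤ (∫ ω, (ψ₁ fun i => X ω i.1) ∂μ) * ∫ ω, (ψ₂ fun i => X ω i.1) ∂μ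

section Aux


variable {Ω : Type*} [MeasurableSpace Ω]

lemma NA.meas_comp {β : Type*} [MeasurableSpace β] [MeasurableSingletonClass β]
    {T : Ω → β} (hT : Measurable T) (hfin : (Set.range T).Finite) (h : β → ℝ) :
    Measurable (fun ω => h (T ω)) := by
  intro s _
  have heq : (fun ω => h (T ω)) ⁻¹' s = T ⁻¹' ((h ⁻¹' s) ∩ Set.range T) := by
    ext ω; simp [Set.mem_preimage]
  rw [heq]
  exact hT ((hfin.subset Set.inter_subset_right).measurableSet)

lemma NA.integrable_of_bound (ν : Measure Ω) [IsFiniteMeasure ν] {g : Ω → ℝ}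
    (hg : Measurable g) (C : ℝ) (hb : ∀ ω, |g ω| ≤ C) : Integrable g ν :=
  Integrable.mono' (integrable_const C) hg.aestronglyMeasurable
    (Filter.Eventually.of_forall (by simpa [Real.norm_eq_abs] using hb))

lemma NA.cond_isFiniteMeasure (ν : Measure Ω) [IsFiniteMeasure ν] (A : Set Ω) :
    IsFiniteMeasure (ν[|A]) := by
  rcases eq_or_ne (ν A) 0 with h | h
  · rw [ProbabilityTheory.cond, Measure.restrict_eq_zero.mpr h, smul_zero]
    infer_instance
  · exact haveI := cond_isProbabilityMeasure (μ := ν) h; inferInstance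

lemma NA.cond_zero (ν : Measure Ω) {A : Set Ω} (h : ν A = 0) : ν[|A] = 0 := by
  rw [ProbabilityTheory.cond, Measure.restrict_eq_zero.mpr h, smul_zero]

lemma NA.setIntegral_cond (ν : Measure Ω) [IsFiniteMeasure ν] (A : Set Ω) (g : Ω → ℝ) :
    ∫ ω in A, g ω ∂ν = (ν A).toReal * ∫ ω, g ω ∂(ν[|A]) := by
  rcases eq_or_ne (ν A) 0 with h | h
  · rw [Measure.restrict_eq_zero.mpr h, NA.cond_zero ν h]
    simp
  · rw [ProbabilityTheory.cond, integral_smul_measure, smul_eq_mul, ← mul_assoc,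
      ENNReal.toReal_inv, mul_inv_cancel₀, one_mul]
    exact ENNReal.toReal_ne_zero.mpr ⟨h, measure_ne_top ν A⟩

lemma NA.integral_partition (ν : Measure Ω) [IsFiniteMeasure ν] {β : Type*}
    [MeasurableSpace β] [MeasurableSingletonClass β] {T : Ω → β} (hT : Measurable T)
    (R : Finset β) (hR : Set.range T ⊆ R) {g : Ω → ℝ} (hg : Integrable g ν) :
    ∫ ω, g ω ∂ν = ∑ b ∈ R, ∫ ω in T ⁻¹' {b}, g ω ∂ν := by
  have hui : (⋃ b ∈ R, T ⁻¹' {b}) = Set.univ := by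
    ext ω
    simp only [Set.mem_iUnion, Set.mem_preimage, Set.mem_singleton_iff, Set.mem_univ, iff_true]
    exact ⟨T ω, hR (Set.mem_range_self ω), rfl⟩
  have := integral_biUnion_finset (μ := ν) (f := g) R
    (fun b _ => hT (measurableSet_singleton b))
    (fun b _ c _ hbc => Set.disjoint_left.mpr (by
      rintro ω h1 h2
      simp only [Set.mem_preimage, Set.mem_singleton_iff] at h1 h2
      exact hbc (h1 ▸ h2 ▸ rfl)))
    (fun b _ => hg.integrableOn)
  rw [hui] at this
  rw [← setIntegral_univ (μ := ν) (f := g)] at *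
  exact this

lemma NA.integral_eq_sum_cond (ν : Measure Ω) [IsFiniteMeasure ν] {β : Type*}
    [MeasurableSpace β] [MeasurableSingletonClass β] {T : Ω → β} (hT : Measurable T)
    (R : Finset β) (hR : Set.range T ⊆ R) {g : Ω → ℝ} (hg : Integrable g ν) :
    ∫ ω, g ω ∂ν = ∑ b ∈ R, (ν (T ⁻¹' {b})).toReal * ∫ ω, g ω ∂(ν[|T ⁻¹' {b}]) := by
  rw [NA.integral_partition ν hT R hR hg]
  exact Finset.sum_congr rfl fun b _ => NA.setIntegral_cond ν _ g

lemma NA.integral_cond_congr (ν : Measure Ω) {A : Set Ω} (hA : MeasurableSet A)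
    {f g : Ω → ℝ} (h : ∀ ω ∈ A, f ω = g ω) :
    ∫ ω, f ω ∂(ν[|A]) = ∫ ω, g ω ∂(ν[|A]) := by
  rw [ProbabilityTheory.cond, integral_smul_measure, integral_smul_measure,
    setIntegral_congr_fun hA h]

lemma NA.integral_cond_const (ν : Measure Ω) [IsFiniteMeasure ν] {A : Set Ω}
    (h : ν A ≠ 0) (c : ℝ) : ∫ _ω, c ∂(ν[|A]) = c := by
  haveI := cond_isProbabilityMeasure (μ := ν) h
  simp

lemma NA.integral_comp_eq_sum (ν : Measure Ω) [IsFiniteMeasure ν] {β : Type*}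
    [MeasurableSpace β] [MeasurableSingletonClass β] {Y : Ω → β} (hY : Measurable Y)
    (R : Finset β) (hR : Set.range Y ⊆ R) (φ : β → ℝ) :
    ∫ ω, φ (Y ω) ∂ν = ∑ b ∈ R, (ν (Y ⁻¹' {b})).toReal * φ b := by
  have hmeas : Measurable (fun ω => φ (Y ω)) :=
    NA.meas_comp hY ((R.finite_toSet).subset hR) φ
  have hb : ∀ ω, |φ (Y ω)| ≤ ∑ b ∈ R, |φ b| := fun ω =>
    Finset.single_le_sum (f := fun b => |φ b|) (fun b _ => abs_nonneg _)
      (hR (Set.mem_range_self ω))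
  rw [NA.integral_partition ν hY R hR (NA.integrable_of_bound ν hmeas _ hb)]
  refine Finset.sum_congr rfl fun b _ => ?_
  rw [setIntegral_congr_fun (hY (measurableSet_singleton b))
    (fun ω (hω : Y ω ∈ ({b} : Set β)) => by
      simp only [Set.mem_singleton_iff] at hω; rw [hω]),
    setIntegral_const, smul_eq_mul, measureReal_def]

lemma NA.integral_comp_of_map_eq {ν₁ ν₂ : Measure Ω} [IsFiniteMeasure ν₁] [IsFiniteMeasure ν₂]
    {β : Type*} [MeasurableSpace β] [MeasurableSingletonClass β] {Y : Ω → β}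
    (hY : Measurable Y) (R : Finset β) (hR : Set.range Y ⊆ R)
    (hmap : Measure.map Y ν₁ = Measure.map Y ν₂) (φ : β → ℝ) :
    ∫ ω, φ (Y ω) ∂ν₁ = ∫ ω, φ (Y ω) ∂ν₂ := by
  rw [NA.integral_comp_eq_sum ν₁ hY R hR φ, NA.integral_comp_eq_sum ν₂ hY R hR φ]
  refine Finset.sum_congr rfl fun b _ => ?_
  have h1 : ν₁ (Y ⁻¹' {b}) = ν₂ (Y ⁻¹' {b}) := by
    rw [← Measure.map_apply hY (measurableSet_singleton b),
      ← Measure.map_apply hY (measurableSet_singleton b), hmap]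
  rw [h1]

end Aux

lemma NA.mono_extension {n : ℕ} (A₁ : Finset (Fin n)) (F : (Fin n → ℝ) → ℝ) (C : ℝ)
    (hC : 0 ≤ C) (P : Finset (Fin n → ℝ)) (hFbd : ∀ s, |F s| ≤ C)
    (hmono : ∀ s ∈ P, ∀ s' ∈ P, (∀ i ∈ A₁, s i ≤ s' i) → F s ≤ F s') :
    ∃ g : ({i : Fin n // i ∈ A₁} → ℝ) → ℝ, Monotone g ∧ (∀ v, |g v| ≤ C) ∧
      ∀ s ∈ P, g (fun i => s i.1) = F s := by
  classical
  refine ⟨fun t => (insert (-C)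
      ((P.filter fun s => ∀ i : {i : Fin n // i ∈ A₁}, s i.1 ≤ t i).image F)).max'
      (Finset.insert_nonempty _ _), ?_, ?_, ?_⟩
  · intro t t' htt'
    apply Finset.max'_subset
    apply Finset.insert_subset_insert
    apply Finset.image_subset_image
    intro s hs
    rw [Finset.mem_filter] at hs ⊢
    exact ⟨hs.1, fun i => (hs.2 i).trans (htt' i)⟩
  · intro t
    show |(insert (-C)
      ((P.filter fun s => ∀ i : {i : Fin n // i ∈ A₁}, s i.1 ≤ t i).image F)).max'
      (Finset.insert_nonempty _ _)| ≤ C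
    have hmem := Finset.max'_mem (insert (-C)
      ((P.filter fun s => ∀ i : {i : Fin n // i ∈ A₁}, s i.1 ≤ t i).image F))
      (Finset.insert_nonempty _ _)
    rw [Finset.mem_insert] at hmem
    rcases hmem with h | h
    · rw [h, abs_neg, abs_of_nonneg hC]
    · obtain ⟨s, _, hs⟩ := Finset.mem_image.mp h
      rw [← hs]
      exact hFbd s
  · intro s₀ h₀
    show (insert (-C)
      ((P.filter fun s => ∀ i : {i : Fin n // i ∈ A₁}, s i.1 ≤ (fun i => s₀ i.1) i).image F)).max'
      (Finset.insert_nonempty _ _) = F s₀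
    apply le_antisymm
    · apply Finset.max'_le
      intro y hy
      rw [Finset.mem_insert] at hy
      rcases hy with rfl | hy
      · exact (abs_le.mp (hFbd s₀)).1
      · obtain ⟨s, hs, rfl⟩ := Finset.mem_image.mp hy
        rw [Finset.mem_filter] at hs
        exact hmono s hs.1 s₀ h₀ (fun i hi => hs.2 ⟨i, hi⟩)
    · apply Finset.le_max'
      apply Finset.mem_insert_of_mem
      exact Finset.mem_image_of_mem F (Finset.mem_filter.mpr ⟨h₀, fun i => le_refl _⟩)

lemma NA.step {Ω : Type*} [MeasurableSpace Ω] (μ : Measure Ω) [IsProbabilityMeasure μ] {n : ℕ}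
    (T Xk : Ω → Fin n → ℝ)
    (hT : Measurable T) (hTfin : (Set.range T).Finite)
    (hX : Measurable Xk) (hXfin : (Set.range Xk).Finite)
    (hNA : ∀ s, μ {ω | T ω = s} ≠ 0 → IsNA (μ[|{ω | T ω = s}]) Xk)
    (hdep : ∀ I : Finset (Fin n), ∀ s, μ {ω | T ω = s} ≠ 0 →
        Measure.map (fun ω (i : {i : Fin n // i ∈ I}) => Xk ω i.1) (μ[|{ω | T ω = s}])
      = Measure.map (fun ω (i : {i : Fin n // i ∈ I}) => Xk ω i.1)
          (μ[|{ω | ∀ i ∈ I, T ω i = s i}]))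
    (hsi : ∀ I : Finset (Fin n), ∀ s s' : Fin n → ℝ, (∀ i ∈ I, s i ≤ s' i) →
        μ {ω | ∀ i ∈ I, T ω i = s i} ≠ 0 → μ {ω | ∀ i ∈ I, T ω i = s' i} ≠ 0 →
        ∀ φ : ({i : Fin n // i ∈ I} → ℝ) → ℝ, Monotone φ → (∃ C, ∀ v, |φ v| ≤ C) →
          ∫ ω, φ (fun i => Xk ω i.1) ∂(μ[|{ω | ∀ i ∈ I, T ω i = s i}])
            ≤ ∫ ω, φ (fun i => Xk ω i.1) ∂(μ[|{ω | ∀ i ∈ I, T ω i = s' i}]))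
    (hTNA : IsNA μ T) :
    IsNA μ (fun ω i => T ω i + Xk ω i) := by
  classical
  intro A₁ A₂ hdisj ψ₁ ψ₂ hm₁ hm₂ hb₁ hb₂
  obtain ⟨C₁, hC₁⟩ := hb₁
  obtain ⟨C₂, hC₂⟩ := hb₂
  have hC₁0 : 0 ≤ C₁ := (abs_nonneg _).trans (hC₁ fun _ => 0)
  have hC₂0 : 0 ≤ C₂ := (abs_nonneg _).trans (hC₂ fun _ => 0)
  -- atoms
  set R : Finset (Fin n → ℝ) := hTfin.toFinset with hRdef
  have hR : Set.range T ⊆ ↑R := by rw [hRdef]; simp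
  have hAmeas : ∀ s : Fin n → ℝ, MeasurableSet {ω | T ω = s} :=
    fun s => hT (measurableSet_singleton s)
  have hApre : ∀ s : Fin n → ℝ, T ⁻¹' {s} = {ω | T ω = s} := fun s => rfl
  have hBmeas : ∀ (I : Finset (Fin n)) (s : Fin n → ℝ),
      MeasurableSet {ω | ∀ i ∈ I, T ω i = s i} := by
    intro I s
    have hset : {ω | ∀ i ∈ I, T ω i = s i}
        = ⋂ i ∈ (I : Set (Fin n)), (fun ω => T ω i) ⁻¹' {s i} := by
      ext ω; simp
    rw [hset]
    exact MeasurableSet.biInter I.countable_toSet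
      (fun i _ => ((measurable_pi_apply i).comp hT) (measurableSet_singleton _))
  have hAB : ∀ (I : Finset (Fin n)) (s : Fin n → ℝ),
      {ω | T ω = s} ⊆ {ω | ∀ i ∈ I, T ω i = s i} := by
    intro I s ω hω i _
    rw [Set.mem_setOf_eq] at hω
    rw [hω]
  -- measurable compositions
  have hcomp : ∀ h : (Fin n → ℝ) → ℝ, Measurable fun ω => h (Xk ω) :=
    fun h => NA.meas_comp hX hXfin h
  have hcompT : ∀ h : (Fin n → ℝ) → ℝ, Measurable fun ω => h (T ω) :=
    fun h => NA.meas_comp hT hTfin h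
  have hVmeas : Measurable (fun ω => (T ω, Xk ω)) := hT.prodMk hX
  have hVfin : (Set.range fun ω => (T ω, Xk ω)).Finite :=
    (hTfin.prod hXfin).subset (by
      rintro _ ⟨ω, rfl⟩
      exact ⟨Set.mem_range_self ω, Set.mem_range_self ω⟩)
  have hcompV : ∀ h : (Fin n → ℝ) × (Fin n → ℝ) → ℝ, Measurable fun ω => h (T ω, Xk ω) :=
    fun h => NA.meas_comp hVmeas hVfin h
  -- restricted X and its range
  have hYmeas : ∀ I : Finset (Fin n),
      Measurable (fun ω (i : {i : Fin n // i ∈ I}) => Xk ω i.1) :=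
    fun I => measurable_pi_lambda _ fun i => (measurable_pi_apply i.1).comp hX
  have hYfin : ∀ I : Finset (Fin n),
      (Set.range (fun ω (i : {i : Fin n // i ∈ I}) => Xk ω i.1)).Finite :=
    fun I => (hXfin.image (fun x (i : {i : Fin n // i ∈ I}) => x i.1)).subset
      (by rintro _ ⟨ω, rfl⟩; exact ⟨Xk ω, Set.mem_range_self ω, rfl⟩)
  -- conditional marginal expectations
  set F₁ : (Fin n → ℝ) → ℝ := fun s =>
    ∫ ω, ψ₁ (fun i => s i.1 + Xk ω i.1) ∂(μ[|{ω | ∀ i ∈ A₁, T ω i = s i}]) with hF₁def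
  set F₂ : (Fin n → ℝ) → ℝ := fun s =>
    ∫ ω, ψ₂ (fun i => s i.1 + Xk ω i.1) ∂(μ[|{ω | ∀ i ∈ A₂, T ω i = s i}]) with hF₂def
  have hF₁bd : ∀ s, |F₁ s| ≤ C₁ := by
    intro s
    simp only [hF₁def]
    rcases eq_or_ne (μ {ω | ∀ i ∈ A₁, T ω i = s i}) 0 with h | h
    · rw [NA.cond_zero μ h, integral_zero_measure]
      simpa using hC₁0
    · haveI := cond_isProbabilityMeasure (μ := μ) h
      have hn := norm_integral_le_of_norm_le_const
        (μ := μ[|{ω | ∀ i ∈ A₁, T ω i = s i}])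
        (f := fun ω => ψ₁ (fun i => s i.1 + Xk ω i.1)) (C := C₁)
        (Filter.Eventually.of_forall fun ω => by
          simpa [Real.norm_eq_abs] using hC₁ (fun i => s i.1 + Xk ω i.1))
      simpa [Real.norm_eq_abs, measure_univ] using hn
  have hF₂bd : ∀ s, |F₂ s| ≤ C₂ := by
    intro s
    simp only [hF₂def]
    rcases eq_or_ne (μ {ω | ∀ i ∈ A₂, T ω i = s i}) 0 with h | h
    · rw [NA.cond_zero μ h, integral_zero_measure]
      simpa using hC₂0
    · haveI := cond_isProbabilityMeasure (μ := μ) h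
      have hn := norm_integral_le_of_norm_le_const
        (μ := μ[|{ω | ∀ i ∈ A₂, T ω i = s i}])
        (f := fun ω => ψ₂ (fun i => s i.1 + Xk ω i.1)) (C := C₂)
        (Filter.Eventually.of_forall fun ω => by
          simpa [Real.norm_eq_abs] using hC₂ (fun i => s i.1 + Xk ω i.1))
      simpa [Real.norm_eq_abs, measure_univ] using hn
  have hF₁mono : ∀ s s', μ {ω | ∀ i ∈ A₁, T ω i = s i} ≠ 0 →
      μ {ω | ∀ i ∈ A₁, T ω i = s' i} ≠ 0 → (∀ i ∈ A₁, s i ≤ s' i) → F₁ s ≤ F₁ s' := by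
    intro s s' hs hs' hle
    simp only [hF₁def]
    haveI := cond_isProbabilityMeasure (μ := μ) hs
    haveI := cond_isProbabilityMeasure (μ := μ) hs'
    have step1 : ∫ ω, ψ₁ (fun i => s i.1 + Xk ω i.1) ∂(μ[|{ω | ∀ i ∈ A₁, T ω i = s i}])
        ≤ ∫ ω, ψ₁ (fun i => s' i.1 + Xk ω i.1) ∂(μ[|{ω | ∀ i ∈ A₁, T ω i = s i}]) := by
      refine integral_mono
        (NA.integrable_of_bound _ (hcomp fun x => ψ₁ (fun i => s i.1 + x i.1)) C₁
          fun ω => hC₁ _)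
        (NA.integrable_of_bound _ (hcomp fun x => ψ₁ (fun i => s' i.1 + x i.1)) C₁
          fun ω => hC₁ _) fun ω => ?_
      exact hm₁ (Pi.le_def.mpr fun i => add_le_add_left (hle i.1 i.2) _)
    have step2 := hsi A₁ s s' hle hs hs' (fun v => ψ₁ (fun i => s' i.1 + v i))
      (fun v v' hv => hm₁ (Pi.le_def.mpr fun i => add_le_add_right (hv i) _))
      ⟨C₁, fun v => hC₁ _⟩
    exact step1.trans step2
  have hF₂mono : ∀ s s', μ {ω | ∀ i ∈ A₂, T ω i = s i} ≠ 0 →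
      μ {ω | ∀ i ∈ A₂, T ω i = s' i} ≠ 0 → (∀ i ∈ A₂, s i ≤ s' i) → F₂ s ≤ F₂ s' := by
    intro s s' hs hs' hle
    simp only [hF₂def]
    haveI := cond_isProbabilityMeasure (μ := μ) hs
    haveI := cond_isProbabilityMeasure (μ := μ) hs'
    have step1 : ∫ ω, ψ₂ (fun i => s i.1 + Xk ω i.1) ∂(μ[|{ω | ∀ i ∈ A₂, T ω i = s i}])
        ≤ ∫ ω, ψ₂ (fun i => s' i.1 + Xk ω i.1) ∂(μ[|{ω | ∀ i ∈ A₂, T ω i = s i}]) := by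
      refine integral_mono
        (NA.integrable_of_bound _ (hcomp fun x => ψ₂ (fun i => s i.1 + x i.1)) C₂
          fun ω => hC₂ _)
        (NA.integrable_of_bound _ (hcomp fun x => ψ₂ (fun i => s' i.1 + x i.1)) C₂
          fun ω => hC₂ _) fun ω => ?_
      exact hm₂ (Pi.le_def.mpr fun i => add_le_add_left (hle i.1 i.2) _)
    have step2 := hsi A₂ s s' hle hs hs' (fun v => ψ₂ (fun i => s' i.1 + v i))
      (fun v v' hv => hm₂ (Pi.le_def.mpr fun i => add_le_add_right (hv i) _))
      ⟨C₂, fun v => hC₂ _⟩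
    exact step1.trans step2
  -- monotone extensions
  obtain ⟨g₁, hg₁mono, hg₁bd, hg₁val⟩ := NA.mono_extension A₁ F₁ C₁ hC₁0
    (R.filter fun s => μ {ω | ∀ i ∈ A₁, T ω i = s i} ≠ 0) hF₁bd
    (fun s hs s' hs' hle => hF₁mono s s' (Finset.mem_filter.mp hs).2
      (Finset.mem_filter.mp hs').2 hle)
  obtain ⟨g₂, hg₂mono, hg₂bd, hg₂val⟩ := NA.mono_extension A₂ F₂ C₂ hC₂0
    (R.filter fun s => μ {ω | ∀ i ∈ A₂, T ω i = s i} ≠ 0) hF₂bd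
    (fun s hs s' hs' hle => hF₂mono s s' (Finset.mem_filter.mp hs).2
      (Finset.mem_filter.mp hs').2 hle)
  have hg₁val' : ∀ s ∈ R, μ {ω | T ω = s} ≠ 0 → g₁ (fun i => s i.1) = F₁ s := by
    intro s hsR hs
    exact hg₁val s (Finset.mem_filter.mpr ⟨hsR,
      fun h0 => hs (measure_mono_null (hAB A₁ s) h0)⟩)
  have hg₂val' : ∀ s ∈ R, μ {ω | T ω = s} ≠ 0 → g₂ (fun i => s i.1) = F₂ s := by
    intro s hsR hs
    exact hg₂val s (Finset.mem_filter.mpr ⟨hsR,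
      fun h0 => hs (measure_mono_null (hAB A₂ s) h0)⟩)
  -- identify conditional marginals via (ii)
  have hmarg₁ : ∀ s, μ {ω | T ω = s} ≠ 0 →
      ∫ ω, ψ₁ (fun i => s i.1 + Xk ω i.1) ∂(μ[|{ω | T ω = s}]) = F₁ s := by
    intro s hs
    simp only [hF₁def]
    haveI := NA.cond_isFiniteMeasure μ {ω | T ω = s}
    haveI := NA.cond_isFiniteMeasure μ {ω | ∀ i ∈ A₁, T ω i = s i}
    exact NA.integral_comp_of_map_eq (hYmeas A₁) (hYfin A₁).toFinset
      (by simp) (hdep A₁ s hs) (fun v => ψ₁ fun i => s i.1 + v i)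
  have hmarg₂ : ∀ s, μ {ω | T ω = s} ≠ 0 →
      ∫ ω, ψ₂ (fun i => s i.1 + Xk ω i.1) ∂(μ[|{ω | T ω = s}]) = F₂ s := by
    intro s hs
    simp only [hF₂def]
    haveI := NA.cond_isFiniteMeasure μ {ω | T ω = s}
    haveI := NA.cond_isFiniteMeasure μ {ω | ∀ i ∈ A₂, T ω i = s i}
    exact NA.integral_comp_of_map_eq (hYmeas A₂) (hYfin A₂).toFinset
      (by simp) (hdep A₂ s hs) (fun v => ψ₂ fun i => s i.1 + v i)
  -- atom congruence
  have hatomprod : ∀ s : Fin n → ℝ,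
      ∫ ω, (ψ₁ fun i => T ω i.1 + Xk ω i.1) * (ψ₂ fun i => T ω i.1 + Xk ω i.1)
          ∂(μ[|{ω | T ω = s}])
      = ∫ ω, (ψ₁ fun i => s i.1 + Xk ω i.1) * (ψ₂ fun i => s i.1 + Xk ω i.1)
          ∂(μ[|{ω | T ω = s}]) := by
    intro s
    refine NA.integral_cond_congr μ (hAmeas s) fun ω hω => ?_
    rw [show T ω = s from hω]
  have hatom₁ : ∀ s : Fin n → ℝ,
      ∫ ω, (ψ₁ fun i => T ω i.1 + Xk ω i.1) ∂(μ[|{ω | T ω = s}])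
      = ∫ ω, ψ₁ (fun i => s i.1 + Xk ω i.1) ∂(μ[|{ω | T ω = s}]) := by
    intro s
    refine NA.integral_cond_congr μ (hAmeas s) fun ω hω => ?_
    rw [show T ω = s from hω]
  have hatom₂ : ∀ s : Fin n → ℝ,
      ∫ ω, (ψ₂ fun i => T ω i.1 + Xk ω i.1) ∂(μ[|{ω | T ω = s}])
      = ∫ ω, ψ₂ (fun i => s i.1 + Xk ω i.1) ∂(μ[|{ω | T ω = s}]) := by
    intro s
    refine NA.integral_cond_congr μ (hAmeas s) fun ω hω => ?_
    rw [show T ω = s from hω]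
  have hatomg : ∀ s : Fin n → ℝ, μ {ω | T ω = s} ≠ 0 →
      ∫ ω, g₁ (fun i => T ω i.1) * g₂ (fun i => T ω i.1) ∂(μ[|{ω | T ω = s}])
      = g₁ (fun i => s i.1) * g₂ (fun i => s i.1) := by
    intro s hs
    rw [NA.integral_cond_congr μ (hAmeas s)
      (g := fun _ => g₁ (fun i => s i.1) * g₂ (fun i => s i.1))
      (fun ω hω => by rw [show T ω = s from hω])]
    exact NA.integral_cond_const μ hs _
  have hatomg₁ : ∀ s : Fin n → ℝ, μ {ω | T ω = s} ≠ 0 →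
      ∫ ω, g₁ (fun i => T ω i.1) ∂(μ[|{ω | T ω = s}]) = g₁ (fun i => s i.1) := by
    intro s hs
    rw [NA.integral_cond_congr μ (hAmeas s) (g := fun _ => g₁ (fun i => s i.1))
      (fun ω hω => by rw [show T ω = s from hω])]
    exact NA.integral_cond_const μ hs _
  have hatomg₂ : ∀ s : Fin n → ℝ, μ {ω | T ω = s} ≠ 0 →
      ∫ ω, g₂ (fun i => T ω i.1) ∂(μ[|{ω | T ω = s}]) = g₂ (fun i => s i.1) := by
    intro s hs
    rw [NA.integral_cond_congr μ (hAmeas s) (g := fun _ => g₂ (fun i => s i.1))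
      (fun ω hω => by rw [show T ω = s from hω])]
    exact NA.integral_cond_const μ hs _
  -- global decomposition into atoms
  have hprodsum : ∫ ω, (ψ₁ fun i => T ω i.1 + Xk ω i.1) * (ψ₂ fun i => T ω i.1 + Xk ω i.1) ∂μ
      = ∑ s ∈ R, (μ {ω | T ω = s}).toReal *
          ∫ ω, (ψ₁ fun i => s i.1 + Xk ω i.1) * (ψ₂ fun i => s i.1 + Xk ω i.1)
            ∂(μ[|{ω | T ω = s}]) := by
    rw [NA.integral_eq_sum_cond μ hT R hR
      (NA.integrable_of_bound μ
        (hcompV fun p => (ψ₁ fun i => p.1 i.1 + p.2 i.1) * (ψ₂ fun i => p.1 i.1 + p.2 i.1))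
        (C₁ * C₂) (fun ω => by
          rw [abs_mul]
          exact mul_le_mul (hC₁ _) (hC₂ _) (abs_nonneg _) hC₁0))]
    simp only [hApre]
    exact Finset.sum_congr rfl fun s _ => by rw [hatomprod s]
  have hsum₁ : ∫ ω, (ψ₁ fun i => T ω i.1 + Xk ω i.1) ∂μ
      = ∑ s ∈ R, (μ {ω | T ω = s}).toReal * F₁ s := by
    rw [NA.integral_eq_sum_cond μ hT R hR
      (NA.integrable_of_bound μ
        (hcompV fun p => ψ₁ fun i => p.1 i.1 + p.2 i.1) C₁ (fun ω => hC₁ _))]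
    simp only [hApre]
    refine Finset.sum_congr rfl fun s _ => ?_
    rcases eq_or_ne (μ {ω | T ω = s}) 0 with h | h
    · rw [h]; simp
    · rw [hatom₁ s, hmarg₁ s h]
  have hsum₂ : ∫ ω, (ψ₂ fun i => T ω i.1 + Xk ω i.1) ∂μ
      = ∑ s ∈ R, (μ {ω | T ω = s}).toReal * F₂ s := by
    rw [NA.integral_eq_sum_cond μ hT R hR
      (NA.integrable_of_bound μ
        (hcompV fun p => ψ₂ fun i => p.1 i.1 + p.2 i.1) C₂ (fun ω => hC₂ _))]
    simp only [hApre]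
    refine Finset.sum_congr rfl fun s _ => ?_
    rcases eq_or_ne (μ {ω | T ω = s}) 0 with h | h
    · rw [h]; simp
    · rw [hatom₂ s, hmarg₂ s h]
  have hgsum : ∫ ω, g₁ (fun i => T ω i.1) * g₂ (fun i => T ω i.1) ∂μ
      = ∑ s ∈ R, (μ {ω | T ω = s}).toReal * (g₁ (fun i => s i.1) * g₂ (fun i => s i.1)) := by
    rw [NA.integral_eq_sum_cond μ hT R hR
      (NA.integrable_of_bound μ
        (hcompT fun x => g₁ (fun i => x i.1) * g₂ (fun i => x i.1)) (C₁ * C₂)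
        (fun ω => by
          rw [abs_mul]
          exact mul_le_mul (hg₁bd _) (hg₂bd _) (abs_nonneg _) hC₁0))]
    simp only [hApre]
    refine Finset.sum_congr rfl fun s _ => ?_
    rcases eq_or_ne (μ {ω | T ω = s}) 0 with h | h
    · rw [h]; simp
    · rw [hatomg s h]
  have hgsum₁ : ∫ ω, g₁ (fun i => T ω i.1) ∂μ
      = ∑ s ∈ R, (μ {ω | T ω = s}).toReal * F₁ s := by
    rw [NA.integral_eq_sum_cond μ hT R hR
      (NA.integrable_of_bound μ (hcompT fun x => g₁ (fun i => x i.1)) C₁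
        (fun ω => hg₁bd _))]
    simp only [hApre]
    refine Finset.sum_congr rfl fun s hsR => ?_
    rcases eq_or_ne (μ {ω | T ω = s}) 0 with h | h
    · rw [h]; simp
    · rw [hatomg₁ s h, hg₁val' s hsR h]
  have hgsum₂ : ∫ ω, g₂ (fun i => T ω i.1) ∂μ
      = ∑ s ∈ R, (μ {ω | T ω = s}).toReal * F₂ s := by
    rw [NA.integral_eq_sum_cond μ hT R hR
      (NA.integrable_of_bound μ (hcompT fun x => g₂ (fun i => x i.1)) C₂
        (fun ω => hg₂bd _))]
    simp only [hApre]
    refine Finset.sum_congr rfl fun s hsR => ?_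
    rcases eq_or_ne (μ {ω | T ω = s}) 0 with h | h
    · rw [h]; simp
    · rw [hatomg₂ s h, hg₂val' s hsR h]
  -- the chain of (in)equalities
  show ∫ ω, (ψ₁ fun i => T ω i.1 + Xk ω i.1) * (ψ₂ fun i => T ω i.1 + Xk ω i.1) ∂μ
      ≤ (∫ ω, (ψ₁ fun i => T ω i.1 + Xk ω i.1) ∂μ) *
          ∫ ω, (ψ₂ fun i => T ω i.1 + Xk ω i.1) ∂μ
  calc ∫ ω, (ψ₁ fun i => T ω i.1 + Xk ω i.1) * (ψ₂ fun i => T ω i.1 + Xk ω i.1) ∂μ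
      = ∑ s ∈ R, (μ {ω | T ω = s}).toReal *
          ∫ ω, (ψ₁ fun i => s i.1 + Xk ω i.1) * (ψ₂ fun i => s i.1 + Xk ω i.1)
            ∂(μ[|{ω | T ω = s}]) := hprodsum
    _ ≤ ∑ s ∈ R, (μ {ω | T ω = s}).toReal * (g₁ (fun i => s i.1) * g₂ (fun i => s i.1)) := by
        refine Finset.sum_le_sum fun s hsR => ?_
        rcases eq_or_ne (μ {ω | T ω = s}) 0 with h | h
        · rw [h]; simp
        · refine mul_le_mul_of_nonneg_left ?_ ENNReal.toReal_nonneg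
          have hna := hNA s h A₁ A₂ hdisj (fun v => ψ₁ fun i => s i.1 + v i)
            (fun v => ψ₂ fun i => s i.1 + v i)
            (fun v v' hv => hm₁ (Pi.le_def.mpr fun i => add_le_add_right (hv i) _))
            (fun v v' hv => hm₂ (Pi.le_def.mpr fun i => add_le_add_right (hv i) _))
            ⟨C₁, fun v => hC₁ _⟩ ⟨C₂, fun v => hC₂ _⟩
          rw [hg₁val' s hsR h, hg₂val' s hsR h]
          calc ∫ ω, (ψ₁ fun i => s i.1 + Xk ω i.1) * (ψ₂ fun i => s i.1 + Xk ω i.1)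
                ∂(μ[|{ω | T ω = s}])
              ≤ (∫ ω, ψ₁ (fun i => s i.1 + Xk ω i.1) ∂(μ[|{ω | T ω = s}])) *
                  ∫ ω, ψ₂ (fun i => s i.1 + Xk ω i.1) ∂(μ[|{ω | T ω = s}]) := hna
            _ = F₁ s * F₂ s := by rw [hmarg₁ s h, hmarg₂ s h]
    _ = ∫ ω, g₁ (fun i => T ω i.1) * g₂ (fun i => T ω i.1) ∂μ := hgsum.symm
    _ ≤ (∫ ω, g₁ (fun i => T ω i.1) ∂μ) * ∫ ω, g₂ (fun i => T ω i.1) ∂μ :=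
        hTNA A₁ A₂ hdisj g₁ g₂ hg₁mono hg₂mono ⟨C₁, hg₁bd⟩ ⟨C₂, hg₂bd⟩
    _ = (∫ ω, (ψ₁ fun i => T ω i.1 + Xk ω i.1) ∂μ) *
          ∫ ω, (ψ₂ fun i => T ω i.1 + Xk ω i.1) ∂μ := by
        rw [hgsum₁, hgsum₂, hsum₁, hsum₂]

/-- partial sums `S^(k)` of finitely-valued random vectors are NA,
provided (i) each `X^(k)` is conditionally NA given `S^(k-1)`, (ii) the conditional
law of `X_I^(k)` given `S^(k-1)` depends only on `S_I^(k-1)`, and (iii) the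
conditional law of `X_I^(k)` given `S_I^(k-1) = s_I` is stochastically increasing
in `s_I`. -/
theorem partial_sums_NA {Ω : Type*} [MeasurableSpace Ω] (μ : Measure Ω)
    [IsProbabilityMeasure μ] (n m : ℕ) (X : ℕ → Ω → Fin n → ℝ)
    (hXmeas : ∀ k, Measurable (X k)) (hXfin : ∀ k, (Set.range (X k)).Finite)
    (S : ℕ → Ω → Fin n → ℝ)
    (hS : ∀ k ω i, S k ω i = ∑ ν ∈ Finset.Icc 1 k, X ν ω i)
    -- (i) conditional negative association
    (hNA : ∀ k ∈ Finset.Icc 1 m, ∀ s : Fin n → ℝ,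
      μ {ω | S (k - 1) ω = s} ≠ 0 → IsNA (μ[|{ω | S (k - 1) ω = s}]) (X k))
    -- (ii) the conditional law of `X_I^(k)` given `S^(k-1)` depends only on `S_I^(k-1)`
    (hdep : ∀ k ∈ Finset.Icc 1 m, ∀ I : Finset (Fin n), ∀ s : Fin n → ℝ,
      μ {ω | S (k - 1) ω = s} ≠ 0 →
      Measure.map (fun ω (i : {i : Fin n // i ∈ I}) => X k ω i.1)
          (μ[|{ω | S (k - 1) ω = s}])
        = Measure.map (fun ω (i : {i : Fin n // i ∈ I}) => X k ω i.1)
          (μ[|{ω | ∀ i ∈ I, S (k - 1) ω i = s i}]))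
    -- (iii) conditional stochastic monotonicity
    (hsi : ∀ k ∈ Finset.Icc 1 m, ∀ I : Finset (Fin n), ∀ s s' : Fin n → ℝ,
      (∀ i ∈ I, s i ≤ s' i) →
      μ {ω | ∀ i ∈ I, S (k - 1) ω i = s i} ≠ 0 →
      μ {ω | ∀ i ∈ I, S (k - 1) ω i = s' i} ≠ 0 →
      ∀ φ : ({i : Fin n // i ∈ I} → ℝ) → ℝ, Monotone φ → (∃ C, ∀ v, |φ v| ≤ C) →
        ∫ ω, φ (fun i => X k ω i.1) ∂(μ[|{ω | ∀ i ∈ I, S (k - 1) ω i = s i}])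
          ≤ ∫ ω, φ (fun i => X k ω i.1) ∂(μ[|{ω | ∀ i ∈ I, S (k - 1) ω i = s' i}])) :
    ∀ k ∈ Finset.Icc 1 m, IsNA μ (S k) := by
  classical
  have hstep : ∀ k ω i, S (k+1) ω i = S k ω i + X (k+1) ω i := by
    intro k ω i
    rw [hS, hS, Finset.sum_Icc_succ_top (Nat.le_add_left 1 k)]
  have hSmeas : ∀ k, Measurable (S k) := by
    intro k
    have h : S k = fun ω i => ∑ ν ∈ Finset.Icc 1 k, X ν ω i := by
      funext ω i; exact hS k ω i
    rw [h]
    exact measurable_pi_lambda _ fun i =>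
      Finset.measurable_sum _ fun ν _ => (measurable_pi_apply i).comp (hXmeas ν)
  have hSfin : ∀ k, (Set.range (S k)).Finite := by
    intro k
    induction k with
    | zero =>
      refine (Set.finite_singleton (fun _ : Fin n => (0:ℝ))).subset ?_
      rintro _ ⟨ω, rfl⟩
      simp only [Set.mem_singleton_iff]
      funext i
      rw [hS]
      simp
    | succ k ih =>
      refine (Set.Finite.image2 (fun a b => a + b) ih (hXfin (k+1))).subset ?_
      rintro _ ⟨ω, rfl⟩
      refine Set.mem_image2.mpr ⟨S k ω, Set.mem_range_self ω, X (k+1) ω, Set.mem_range_self ω, ?_⟩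
      funext i
      simp only [Pi.add_apply]
      exact (hstep k ω i).symm
  suffices H : ∀ k, k ≤ m → IsNA μ (S k) by
    intro k hk
    exact H k (Finset.mem_Icc.mp hk).2
  intro k
  induction k with
  | zero =>
    intro _
    intro A₁ A₂ hdisj ψ₁ ψ₂ hm₁ hm₂ hb₁ hb₂
    have h0 : ∀ ω i, S 0 ω i = 0 := by
      intro ω i
      rw [hS]
      simp
    have e1 : ∀ ω : Ω, (fun i : {i : Fin n // i ∈ A₁} => S 0 ω i.1) = fun _ => (0:ℝ) := by
      intro ω; funext i; exact h0 ω i.1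
    have e2 : ∀ ω : Ω, (fun i : {i : Fin n // i ∈ A₂} => S 0 ω i.1) = fun _ => (0:ℝ) := by
      intro ω; funext i; exact h0 ω i.1
    have r1 : (fun ω => (ψ₁ fun i : {i : Fin n // i ∈ A₁} => S 0 ω i.1) *
        (ψ₂ fun i : {i : Fin n // i ∈ A₂} => S 0 ω i.1))
        = fun _ : Ω => (ψ₁ fun _ => 0) * (ψ₂ fun _ => 0) := by
      funext ω; rw [e1 ω, e2 ω]
    have r2 : (fun ω => (ψ₁ fun i : {i : Fin n // i ∈ A₁} => S 0 ω i.1))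
        = fun _ : Ω => (ψ₁ fun _ => 0) := by
      funext ω; rw [e1 ω]
    have r3 : (fun ω => (ψ₂ fun i : {i : Fin n // i ∈ A₂} => S 0 ω i.1))
        = fun _ : Ω => (ψ₂ fun _ => 0) := by
      funext ω; rw [e2 ω]
    rw [r1, r2, r3, integral_const, integral_const, integral_const]
    simp
  | succ k IH =>
    intro hk
    have IH' := IH (Nat.le_of_succ_le hk)
    have hK : k + 1 ∈ Finset.Icc 1 m := Finset.mem_Icc.mpr ⟨Nat.le_add_left 1 k, hk⟩
    have hSk1 : S (k+1) = fun ω i => S k ω i + X (k+1) ω i := by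
      funext ω i; exact hstep k ω i
    rw [hSk1]
    refine NA.step μ (S k) (X (k+1)) (hSmeas k) (hSfin k) (hXmeas (k+1)) (hXfin (k+1))
      ?_ ?_ ?_ IH'
    · exact fun s hs => hNA (k+1) hK s hs
    · exact fun I s hs => hdep (k+1) hK I s hs
    · exact fun I s s' h h0 h1 => hsi (k+1) hK I s s' h h0 h1
end
end

section
/- Consider a knockout tournament with n = 2^ℓ players (ℓ ≥ 2) of equal strength and a deterministic draw: in round 1 player 2i−1 plays player 2i for i = 1,…,n/2; in each subsequent round the winners of consecutive pairs of matches of the previous round play each other; each match is won by either participant with probability 1/2, independently of all other matches; losers are eliminated. Let S_i be the number of matches won by player i. Then the score vector S = (S_1, …, S_n) is negatively associated (NA). -/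
open scoped Classical
open Finset

noncomputable section

/-- Probability of the event `A` on a finite sample space with weights `w`. -/
def Pr {Ω : Type*} [Fintype Ω] (w : Ω → ℝ) (A : Ω → Prop) : ℝ :=
  ∑ ω : Ω, if A ω then w ω else 0

/-- Expectation of `f` on a finite sample space with weights `w`. -/
def Expec {Ω : Type*} [Fintype Ω] (w : Ω → ℝ) (f : Ω → ℝ) : ℝ :=
  ∑ ω : Ω, w ω * f ω

/-- Conditional expectation of `f` given the event `A` under weights `w`. -/
def CExp {Ω : Type*} [Fintype Ω] (w : Ω → ℝ) (A : Ω → Prop) (f : Ω → ℝ) : ℝ :=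
  (∑ ω : Ω, if A ω then w ω * f ω else 0) / Pr w A

/-- `[X_I | A] ≤_st [X_I | B]` : the conditional distribution of the subvector `X_I`
given the event `A` is dominated, in the usual stochastic order, by the conditional
distribution of `X_I` given `B`; i.e. conditional expectations of every bounded
coordinatewise increasing function compare. -/
def CondSubvecStochLE {Ω : Type*} [Fintype Ω] {n : ℕ} (w : Ω → ℝ)
    (X : Ω → Fin n → ℝ) (I : Finset (Fin n)) (A B : Ω → Prop) : Prop :=
  ∀ φ : ({i : Fin n // i ∈ I} → ℝ) → ℝ, Monotone φ → (∃ C, ∀ v, |φ v| ≤ C) →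
    CExp w A (fun ω => φ fun i => X ω i.1) ≤ CExp w B (fun ω => φ fun i => X ω i.1)

/-- Negative regression dependence: `[X_I | X_J = x_J] ≥_st [X_I | X_J = x_J*]`
whenever `x_J ≤ x_J*` componentwise and both conditioning events have
positive probability. -/
def IsNRD {Ω : Type*} [Fintype Ω] {n : ℕ} (w : Ω → ℝ) (X : Ω → Fin n → ℝ) : Prop :=
  ∀ I J : Finset (Fin n), Disjoint I J → ∀ x y : Fin n → ℝ, (∀ j ∈ J, x j ≤ y j) →
    0 < Pr w (fun ω => ∀ j ∈ J, X ω j = x j) →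
    0 < Pr w (fun ω => ∀ j ∈ J, X ω j = y j) →
    CondSubvecStochLE w X I (fun ω => ∀ j ∈ J, X ω j = y j)
      (fun ω => ∀ j ∈ J, X ω j = x j)

/-- Negative left-tail dependence: `[X_I | X_J ≤ x_J] ≥_st [X_I | X_J ≤ x_J*]`
whenever `x_J ≤ x_J*` componentwise and both conditioning events have
positive probability. -/
def IsNLTD {Ω : Type*} [Fintype Ω] {n : ℕ} (w : Ω → ℝ) (X : Ω → Fin n → ℝ) : Prop :=
  ∀ I J : Finset (Fin n), Disjoint I J → ∀ x y : Fin n → ℝ, (∀ j ∈ J, x j ≤ y j) →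
    0 < Pr w (fun ω => ∀ j ∈ J, X ω j ≤ x j) →
    0 < Pr w (fun ω => ∀ j ∈ J, X ω j ≤ y j) →
    CondSubvecStochLE w X I (fun ω => ∀ j ∈ J, X ω j ≤ y j)
      (fun ω => ∀ j ∈ J, X ω j ≤ x j)

/-- Negative right-tail dependence: `[X_I | X_J > x_J] ≥_st [X_I | X_J > x_J*]`
whenever `x_J ≤ x_J*` componentwise and both conditioning events have
positive probability. -/
def IsNRTD {Ω : Type*} [Fintype Ω] {n : ℕ} (w : Ω → ℝ) (X : Ω → Fin n → ℝ) : Prop :=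
  ∀ I J : Finset (Fin n), Disjoint I J → ∀ x y : Fin n → ℝ, (∀ j ∈ J, x j ≤ y j) →
    0 < Pr w (fun ω => ∀ j ∈ J, x j < X ω j) →
    0 < Pr w (fun ω => ∀ j ∈ J, y j < X ω j) →
    CondSubvecStochLE w X I (fun ω => ∀ j ∈ J, y j < X ω j)
      (fun ω => ∀ j ∈ J, x j < X ω j)

/-- Negative association on a finite weighted sample space:
`Cov(ψ₁(X_{A₁}), ψ₂(X_{A₂})) ≤ 0` for disjoint `A₁, A₂` and bounded
coordinatewise increasing `ψ₁, ψ₂`. -/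
def IsNAfin {Ω : Type*} [Fintype Ω] {n : ℕ} (w : Ω → ℝ) (X : Ω → Fin n → ℝ) : Prop :=
  ∀ A₁ A₂ : Finset (Fin n), Disjoint A₁ A₂ →
    ∀ ψ₁ : ({i : Fin n // i ∈ A₁} → ℝ) → ℝ, ∀ ψ₂ : ({i : Fin n // i ∈ A₂} → ℝ) → ℝ,
      Monotone ψ₁ → Monotone ψ₂ → (∃ C, ∀ v, |ψ₁ v| ≤ C) → (∃ C, ∀ v, |ψ₂ v| ≤ C) →
      Expec w (fun ω => (ψ₁ fun i => X ω i.1) * (ψ₂ fun i => X ω i.1))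
        ≤ Expec w (fun ω => ψ₁ fun i => X ω i.1) * Expec w (fun ω => ψ₂ fun i => X ω i.1)

/-- The uniform distribution on the permutations of `Fin n`. -/
def unifPerm (n : ℕ) : Equiv.Perm (Fin n) → ℝ := fun _ => (Nat.factorial n : ℝ)⁻¹

/-- The random vector with the permutation distribution on `a`:
`X = (a_{σ(1)}, …, a_{σ(n)})` for a uniformly random permutation `σ`. -/
def permVec {n : ℕ} (a : Fin n → ℝ) (σ : Equiv.Perm (Fin n)) : Fin n → ℝ :=
  fun i => a (σ i)

/-- The sample space of match outcomes of a knockout tournament with `2^ℓ` players: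
`ω r b` is the outcome of the match indexed `b` in round `r+1` (all matches of
round `r+1` have indices `b < 2^(ℓ-1-r)`; the remaining coordinates are unused
padding coins). -/
abbrev TournOmega (ℓ : ℕ) := Fin ℓ → Fin (2 ^ (ℓ - 1)) → Bool

/-- The uniform distribution on match outcomes: all matches are independent fair
coin flips (players of equal strength). -/
def tournUnif (ℓ : ℕ) : TournOmega ℓ → ℝ := fun _ => (Fintype.card (TournOmega ℓ) : ℝ)⁻¹

/-- `tournWinner ℓ ω r b` is the (0-indexed) player winning the sub-tournament among
players `b·2^r, …, (b+1)·2^r - 1` after round `r`.  In round `r+1` the winner of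
block `2b` of level `r` plays the winner of block `2b+1` of level `r`  (so in round 1
player `2b` plays player `2b+1`, and in each subsequent round the winners of
consecutive pairs of matches of the previous round play each other); the outcome bit
`ω r b` decides the match. -/
def tournWinner (ℓ : ℕ) (ω : TournOmega ℓ) : ℕ → ℕ → ℕ
  | 0, b => b
  | r + 1, b =>
    if h : r < ℓ ∧ b < 2 ^ (ℓ - 1) then
      if ω ⟨r, h.1⟩ ⟨b, h.2⟩ then tournWinner ℓ ω r (2 * b)
      else tournWinner ℓ ω r (2 * b + 1)
    else 0

/-- `tournScore ℓ ω i` is the number of matches won by (0-indexed) player `i`: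
the number of rounds `r ∈ {1,…,ℓ}` after which player `i` is still the winner of
its block. -/
def tournScore (ℓ : ℕ) (ω : TournOmega ℓ) : Fin (2 ^ ℓ) → ℝ := fun i =>
  (((Finset.Icc 1 ℓ).filter fun r => tournWinner ℓ ω r (i.1 / 2 ^ r) = i.1).card : ℝ)

namespace KTNA

/-! ### The bump function -/

def bumpFn (ℓ : ℕ) (s : ℝ) : ℝ := s + max 0 (min 1 (s - ℓ + 1))

lemma bumpFn_mono (ℓ : ℕ) : Monotone (bumpFn ℓ) := by
  intro s t h
  unfold bumpFn
  have h1 : min 1 (s - ℓ + 1) ≤ min 1 (t - ℓ + 1) := min_le_min le_rfl (by linarith)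
  have h2 := max_le_max (le_refl (0:ℝ)) h1
  linarith

lemma self_le_bumpFn (ℓ : ℕ) (s : ℝ) : s ≤ bumpFn ℓ s :=
  le_add_of_nonneg_right (le_max_left _ _)

lemma bumpFn_of_le (ℓ : ℕ) {s : ℝ} (h : s ≤ (ℓ:ℝ) - 1) : bumpFn ℓ s = s := by
  unfold bumpFn
  have h1 : min 1 (s - ℓ + 1) ≤ 0 := le_trans (min_le_right _ _) (by linarith)
  rw [max_eq_left h1, add_zero]

lemma bumpFn_champ (ℓ : ℕ) : bumpFn ℓ (ℓ:ℝ) = (ℓ:ℝ) + 1 := by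
  unfold bumpFn; norm_num

/-! ### Index helpers -/

lemma ri_lt {ℓ : ℕ} {i : Fin (2^(ℓ+1))} (h : ¬ i.1 < 2^ℓ) : i.1 - 2^ℓ < 2^ℓ := by
  have := i.2; omega

def finL (ℓ : ℕ) (j : Fin (2^ℓ)) : Fin (2^(ℓ+1)) := ⟨j.1, by have := j.2; omega⟩
def finR (ℓ : ℕ) (j : Fin (2^ℓ)) : Fin (2^(ℓ+1)) := ⟨2^ℓ + j.1, by have := j.2; omega⟩

def lpart (ℓ : ℕ) (A : Finset (Fin (2^(ℓ+1)))) : Finset (Fin (2^ℓ)) :=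
  univ.filter (fun j => finL ℓ j ∈ A)
def rpart (ℓ : ℕ) (A : Finset (Fin (2^(ℓ+1)))) : Finset (Fin (2^ℓ)) :=
  univ.filter (fun j => finR ℓ j ∈ A)

lemma mem_lpart {ℓ : ℕ} {A : Finset (Fin (2^(ℓ+1)))} {j : Fin (2^ℓ)} :
    j ∈ lpart ℓ A ↔ finL ℓ j ∈ A := by simp [lpart]
lemma mem_rpart {ℓ : ℕ} {A : Finset (Fin (2^(ℓ+1)))} {j : Fin (2^ℓ)} :
    j ∈ rpart ℓ A ↔ finR ℓ j ∈ A := by simp [rpart]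

lemma disjoint_lpart {ℓ : ℕ} {A₁ A₂ : Finset (Fin (2^(ℓ+1)))} (h : Disjoint A₁ A₂) :
    Disjoint (lpart ℓ A₁) (lpart ℓ A₂) := by
  rw [Finset.disjoint_left] at h ⊢
  intro j h1 h2
  exact h (mem_lpart.mp h1) (mem_lpart.mp h2)

lemma disjoint_rpart {ℓ : ℕ} {A₁ A₂ : Finset (Fin (2^(ℓ+1)))} (h : Disjoint A₁ A₂) :
    Disjoint (rpart ℓ A₁) (rpart ℓ A₂) := by
  rw [Finset.disjoint_left] at h ⊢
  intro j h1 h2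
  exact h (mem_rpart.mp h1) (mem_rpart.mp h2)

/-! ### Product structures -/

variable {Ω₁ Ω₂ : Type*} [Fintype Ω₁] [Fintype Ω₂]

def pairW (w₁ : Ω₁ → ℝ) (w₂ : Ω₂ → ℝ) : Ω₁ × Ω₂ → ℝ := fun p => w₁ p.1 * w₂ p.2

def tripW (w₁ : Ω₁ → ℝ) (w₂ : Ω₂ → ℝ) : Ω₁ × Ω₂ × Bool → ℝ :=
  fun p => w₁ p.1 * w₂ p.2.1 * 2⁻¹

def pairVec (ℓ : ℕ) (X₁ : Ω₁ → Fin (2^ℓ) → ℝ) (X₂ : Ω₂ → Fin (2^ℓ) → ℝ) :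
    Ω₁ × Ω₂ → Fin (2^(ℓ+1)) → ℝ := fun p i =>
  if h : i.1 < 2^ℓ then X₁ p.1 ⟨i.1, h⟩ else X₂ p.2 ⟨i.1 - 2^ℓ, ri_lt h⟩

def scoreStep (ℓ : ℕ) (X₁ : Ω₁ → Fin (2^ℓ) → ℝ) (X₂ : Ω₂ → Fin (2^ℓ) → ℝ) :
    Ω₁ × Ω₂ × Bool → Fin (2^(ℓ+1)) → ℝ := fun p i =>
  if i.1 < 2^ℓ then
    (if p.2.2 then bumpFn ℓ (pairVec ℓ X₁ X₂ (p.1, p.2.1) i)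
     else pairVec ℓ X₁ X₂ (p.1, p.2.1) i)
  else
    (if p.2.2 then pairVec ℓ X₁ X₂ (p.1, p.2.1) i
     else bumpFn ℓ (pairVec ℓ X₁ X₂ (p.1, p.2.1) i))

def champStep (ℓ : ℕ) (c₁ : Ω₁ → Fin (2^ℓ)) (c₂ : Ω₂ → Fin (2^ℓ)) :
    Ω₁ × Ω₂ × Bool → Fin (2^(ℓ+1)) := fun p =>
  if p.2.2 then finL ℓ (c₁ p.1) else finR ℓ (c₂ p.2.1)

def Spec (ℓ : ℕ) {Ω : Type*} (X : Ω → Fin (2^ℓ) → ℝ) (c : Ω → Fin (2^ℓ)) : Prop :=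
  ∀ a i, (i = c a ∧ X a i = (ℓ:ℝ)) ∨ (i ≠ c a ∧ X a i ≤ (ℓ:ℝ) - 1)

lemma spec_step {ℓ : ℕ} {X₁ : Ω₁ → Fin (2^ℓ) → ℝ} {X₂ : Ω₂ → Fin (2^ℓ) → ℝ}
    {c₁ : Ω₁ → Fin (2^ℓ)} {c₂ : Ω₂ → Fin (2^ℓ)}
    (h₁ : Spec ℓ X₁ c₁) (h₂ : Spec ℓ X₂ c₂) :
    Spec (ℓ+1) (scoreStep ℓ X₁ X₂) (champStep ℓ c₁ c₂) := by
  rintro ⟨a, b, c⟩ i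
  by_cases hi : i.1 < 2^ℓ
  · have hpv : pairVec ℓ X₁ X₂ (a, b) i = X₁ a ⟨i.1, hi⟩ := dif_pos hi
    rcases h₁ a ⟨i.1, hi⟩ with ⟨he, hs⟩ | ⟨hne, hs⟩
    · cases c
      · right
        constructor
        · intro hc
          have : i.1 = 2^ℓ + (c₂ b).1 := by
            have := congrArg Fin.val hc; simpa [champStep, finR] using this
          omega
        · simp only [scoreStep, if_pos hi, if_neg Bool.false_ne_true, hpv, hs]
          push_cast; linarith
      · left
        constructor
        · apply Fin.ext
          have := congrArg Fin.val he
          simp only [champStep, finL, if_pos rfl]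
          simpa using this
        · simp only [scoreStep, if_pos hi, if_pos rfl, hpv, hs, bumpFn_champ]
          push_cast; ring
    · right
      constructor
      · intro hc
        cases c
        · have : i.1 = 2^ℓ + (c₂ b).1 := by
            have := congrArg Fin.val hc; simpa [champStep, finR] using this
          omega
        · apply hne
          apply Fin.ext
          have := congrArg Fin.val hc; simpa [champStep, finL] using this
      · have hb : bumpFn ℓ (X₁ a ⟨i.1, hi⟩) = X₁ a ⟨i.1, hi⟩ := bumpFn_of_le ℓ hs
        have : scoreStep ℓ X₁ X₂ (a, b, c) i = X₁ a ⟨i.1, hi⟩ := by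
          cases c <;> simp [scoreStep, if_pos hi, hpv, hb]
        rw [this]; push_cast; linarith
  · have hpv : pairVec ℓ X₁ X₂ (a, b) i = X₂ b ⟨i.1 - 2^ℓ, ri_lt hi⟩ := dif_neg hi
    have hval : 2^ℓ + (i.1 - 2^ℓ) = i.1 := by omega
    rcases h₂ b ⟨i.1 - 2^ℓ, ri_lt hi⟩ with ⟨he, hs⟩ | ⟨hne, hs⟩
    · cases c
      · left
        constructor
        · have hv : i.1 - 2^ℓ = (c₂ b).val := by rw [← he]
          apply Fin.ext
          simp only [champStep, finR, if_neg Bool.false_ne_true]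
          omega
        · simp only [scoreStep, if_neg hi, if_neg Bool.false_ne_true, hpv, hs, bumpFn_champ]
          push_cast; ring
      · right
        constructor
        · intro hc
          have : i.1 = (c₁ a).1 := by
            have := congrArg Fin.val hc; simpa [champStep, finL] using this
          have := (c₁ a).2; omega
        · simp only [scoreStep, if_neg hi, if_pos rfl, hpv, hs]
          push_cast; linarith
    · right
      constructor
      · intro hc
        cases c
        · have hv := congrArg Fin.val hc
          simp only [champStep, finR, if_neg Bool.false_ne_true] at hv
          apply hne
          apply Fin.ext
          show i.1 - 2^ℓ = (c₂ b).val
          omega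
        · have : i.1 = (c₁ a).1 := by
            have := congrArg Fin.val hc; simpa [champStep, finL] using this
          have := (c₁ a).2; omega
      · have hb : bumpFn ℓ (X₂ b ⟨i.1 - 2^ℓ, ri_lt hi⟩) = X₂ b ⟨i.1 - 2^ℓ, ri_lt hi⟩ :=
          bumpFn_of_le ℓ hs
        have : scoreStep ℓ X₁ X₂ (a, b, c) i = X₂ b ⟨i.1 - 2^ℓ, ri_lt hi⟩ := by
          cases c <;> simp [scoreStep, if_neg hi, hpv, hb]
        rw [this]; push_cast; linarith

end KTNA
namespace KTNA

set_option linter.unusedSectionVars false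

variable {Ω₁ Ω₂ : Type*} [Fintype Ω₁] [Fintype Ω₂]

lemma abs_wsum_le {Ω : Type*} [Fintype Ω] {w f : Ω → ℝ} {C : ℝ}
    (h0 : ∀ a, 0 ≤ w a) (h1 : ∑ a, w a = 1) (hf : ∀ a, |f a| ≤ C) :
    |∑ a, w a * f a| ≤ C := by
  calc |∑ a, w a * f a| ≤ ∑ a, |w a * f a| := Finset.abs_sum_le_sum_abs _ _
    _ = ∑ a, w a * |f a| := by
        apply Finset.sum_congr rfl
        intro a _
        rw [abs_mul, abs_of_nonneg (h0 a)]
    _ ≤ ∑ a, w a * C := by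
        apply Finset.sum_le_sum
        intro a _
        exact mul_le_mul_of_nonneg_left (hf a) (h0 a)
    _ = C := by rw [← Finset.sum_mul, h1, one_mul]

lemma Expec_pairW (w₁ : Ω₁ → ℝ) (w₂ : Ω₂ → ℝ) (f : Ω₁ × Ω₂ → ℝ) :
    Expec (pairW w₁ w₂) f = ∑ a, w₁ a * ∑ b, w₂ b * f (a, b) := by
  rw [Expec, Fintype.sum_prod_type]
  apply Finset.sum_congr rfl
  intro a _
  rw [Finset.mul_sum]
  apply Finset.sum_congr rfl
  intro b _
  simp only [pairW]; ring

lemma Expec_tripW (w₁ : Ω₁ → ℝ) (w₂ : Ω₂ → ℝ) (f : Ω₁ × Ω₂ × Bool → ℝ) :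
    Expec (tripW w₁ w₂) f
      = ∑ p : Ω₁ × Ω₂, pairW w₁ w₂ p * (2⁻¹ * f (p.1, p.2, true) + 2⁻¹ * f (p.1, p.2, false)) := by
  rw [Expec, Fintype.sum_prod_type, Fintype.sum_prod_type]
  apply Finset.sum_congr rfl
  intro a _
  rw [Fintype.sum_prod_type]
  apply Finset.sum_congr rfl
  intro b _
  rw [Fintype.sum_bool]
  simp only [tripW, pairW]
  ring

lemma tripW_nonneg {w₁ : Ω₁ → ℝ} {w₂ : Ω₂ → ℝ}
    (h1 : ∀ a, 0 ≤ w₁ a) (h2 : ∀ b, 0 ≤ w₂ b) (p : Ω₁ × Ω₂ × Bool) :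
    0 ≤ tripW w₁ w₂ p := by
  have := h1 p.1; have := h2 p.2.1
  unfold tripW; positivity

lemma sum_tripW {w₁ : Ω₁ → ℝ} {w₂ : Ω₂ → ℝ}
    (h1 : ∑ a, w₁ a = 1) (h2 : ∑ b, w₂ b = 1) :
    ∑ p : Ω₁ × Ω₂ × Bool, tripW w₁ w₂ p = 1 := by
  have := Expec_tripW w₁ w₂ (fun _ => 1)
  simp only [Expec, mul_one] at this
  rw [this]
  have : ∀ p : Ω₁ × Ω₂, pairW w₁ w₂ p * (2⁻¹ + 2⁻¹) = pairW w₁ w₂ p := by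
    intro p; ring
  rw [Finset.sum_congr rfl (fun p _ => this p)]
  rw [Fintype.sum_prod_type]
  have : ∀ a, ∑ b, pairW w₁ w₂ (a, b) = w₁ a := by
    intro a
    simp only [pairW]
    rw [← Finset.mul_sum, h2, mul_one]
  rw [Finset.sum_congr rfl (fun a _ => this a), h1]

/-! ### Gluing functions for the concatenation argument -/

def glueR (ℓ : ℕ) (X₁ : Ω₁ → Fin (2^ℓ) → ℝ) (a : Ω₁)
    (A : Finset (Fin (2^(ℓ+1)))) (ψ : ({i // i ∈ A} → ℝ) → ℝ) :
    ({j // j ∈ rpart ℓ A} → ℝ) → ℝ := fun u =>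
  ψ (fun i => if h : i.1.1 < 2^ℓ then X₁ a ⟨i.1.1, h⟩
      else u ⟨⟨i.1.1 - 2^ℓ, ri_lt h⟩, by
        rw [mem_rpart]
        have he : finR ℓ ⟨i.1.1 - 2^ℓ, ri_lt h⟩ = i.1 := by
          apply Fin.ext
          show 2^ℓ + (i.1.1 - 2^ℓ) = i.1.1
          omega
        rw [he]; exact i.2⟩)

lemma glueR_mono {ℓ : ℕ} {X₁ : Ω₁ → Fin (2^ℓ) → ℝ} {a : Ω₁}
    {A : Finset (Fin (2^(ℓ+1)))} {ψ : ({i // i ∈ A} → ℝ) → ℝ} (hm : Monotone ψ) :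
    Monotone (glueR ℓ X₁ a A ψ) := by
  intro u v huv
  apply hm
  intro i
  dsimp only
  split
  · exact le_refl _
  · exact huv _

lemma glueR_eval {ℓ : ℕ} {X₁ : Ω₁ → Fin (2^ℓ) → ℝ} {X₂ : Ω₂ → Fin (2^ℓ) → ℝ}
    {a : Ω₁} (b : Ω₂) {A : Finset (Fin (2^(ℓ+1)))} (ψ : ({i // i ∈ A} → ℝ) → ℝ) :
    glueR ℓ X₁ a A ψ (fun j => X₂ b j.1)
      = ψ (fun i => pairVec ℓ X₁ X₂ (a, b) i.1) := by
  rfl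

def glueL (ℓ : ℕ) (w₂ : Ω₂ → ℝ) (X₂ : Ω₂ → Fin (2^ℓ) → ℝ)
    (A : Finset (Fin (2^(ℓ+1)))) (ψ : ({i // i ∈ A} → ℝ) → ℝ) :
    ({j // j ∈ lpart ℓ A} → ℝ) → ℝ := fun u =>
  ∑ b, w₂ b * ψ (fun i => if h : i.1.1 < 2^ℓ then
      u ⟨⟨i.1.1, h⟩, by
        rw [mem_lpart]
        have he : finL ℓ ⟨i.1.1, h⟩ = i.1 := Fin.ext rfl
        rw [he]; exact i.2⟩
      else X₂ b ⟨i.1.1 - 2^ℓ, ri_lt h⟩)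

lemma glueL_mono {ℓ : ℕ} {w₂ : Ω₂ → ℝ} {X₂ : Ω₂ → Fin (2^ℓ) → ℝ}
    {A : Finset (Fin (2^(ℓ+1)))} {ψ : ({i // i ∈ A} → ℝ) → ℝ}
    (hw : ∀ b, 0 ≤ w₂ b) (hm : Monotone ψ) :
    Monotone (glueL ℓ w₂ X₂ A ψ) := by
  intro u v huv
  apply Finset.sum_le_sum
  intro b _
  apply mul_le_mul_of_nonneg_left _ (hw b)
  apply hm
  intro i
  dsimp only
  split
  · exact huv _
  · exact le_refl _

lemma glueL_eval {ℓ : ℕ} {w₂ : Ω₂ → ℝ} {X₁ : Ω₁ → Fin (2^ℓ) → ℝ} {X₂ : Ω₂ → Fin (2^ℓ) → ℝ}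
    (a : Ω₁) {A : Finset (Fin (2^(ℓ+1)))} (ψ : ({i // i ∈ A} → ℝ) → ℝ) :
    glueL ℓ w₂ X₂ A ψ (fun j => X₁ a j.1)
      = ∑ b, w₂ b * ψ (fun i => pairVec ℓ X₁ X₂ (a, b) i.1) := by
  rfl

/-! ### Concatenation of independent NA vectors -/

theorem concat_NA {ℓ : ℕ} {w₁ : Ω₁ → ℝ} {w₂ : Ω₂ → ℝ}
    {X₁ : Ω₁ → Fin (2^ℓ) → ℝ} {X₂ : Ω₂ → Fin (2^ℓ) → ℝ}
    (hw₁0 : ∀ a, 0 ≤ w₁ a) (hw₁1 : ∑ a, w₁ a = 1)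
    (hw₂0 : ∀ b, 0 ≤ w₂ b) (hw₂1 : ∑ b, w₂ b = 1)
    (h₁ : IsNAfin w₁ X₁) (h₂ : IsNAfin w₂ X₂) :
    IsNAfin (pairW w₁ w₂) (pairVec ℓ X₁ X₂) := by
  intro A₁ A₂ hd ψ₁ ψ₂ hm₁ hm₂ hb₁ hb₂
  obtain ⟨C₁, hC₁⟩ := hb₁
  obtain ⟨C₂, hC₂⟩ := hb₂
  set G₁ : Ω₁ → ℝ := fun a => ∑ b, w₂ b * ψ₁ (fun i => pairVec ℓ X₁ X₂ (a, b) i.1) with hG₁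
  set G₂ : Ω₁ → ℝ := fun a => ∑ b, w₂ b * ψ₂ (fun i => pairVec ℓ X₁ X₂ (a, b) i.1) with hG₂
  have inner : ∀ a : Ω₁,
      ∑ b, w₂ b * (ψ₁ (fun i => pairVec ℓ X₁ X₂ (a, b) i.1) *
        ψ₂ (fun i => pairVec ℓ X₁ X₂ (a, b) i.1)) ≤ G₁ a * G₂ a := by
    intro a
    have key := h₂ (rpart ℓ A₁) (rpart ℓ A₂) (disjoint_rpart hd)
      (glueR ℓ X₁ a A₁ ψ₁) (glueR ℓ X₁ a A₂ ψ₂)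
      (glueR_mono hm₁) (glueR_mono hm₂)
      ⟨C₁, fun v => hC₁ _⟩ ⟨C₂, fun v => hC₂ _⟩
    simp only [Expec] at key
    calc ∑ b, w₂ b * (ψ₁ (fun i => pairVec ℓ X₁ X₂ (a, b) i.1) *
          ψ₂ (fun i => pairVec ℓ X₁ X₂ (a, b) i.1))
        = ∑ b, w₂ b * (glueR ℓ X₁ a A₁ ψ₁ (fun j => X₂ b j.1) *
            glueR ℓ X₁ a A₂ ψ₂ (fun j => X₂ b j.1)) := by
          apply Finset.sum_congr rfl
          intro b _
          rw [glueR_eval b ψ₁, glueR_eval b ψ₂]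
      _ ≤ (∑ b, w₂ b * glueR ℓ X₁ a A₁ ψ₁ (fun j => X₂ b j.1)) *
            (∑ b, w₂ b * glueR ℓ X₁ a A₂ ψ₂ (fun j => X₂ b j.1)) := key
      _ = G₁ a * G₂ a := by
          congr 1 <;> · apply Finset.sum_congr rfl
                        intro b _
                        rw [glueR_eval]
  have houter := h₁ (lpart ℓ A₁) (lpart ℓ A₂) (disjoint_lpart hd)
      (glueL ℓ w₂ X₂ A₁ ψ₁) (glueL ℓ w₂ X₂ A₂ ψ₂)
      (glueL_mono hw₂0 hm₁) (glueL_mono hw₂0 hm₂)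
      ⟨C₁, fun v => abs_wsum_le hw₂0 hw₂1 (fun b => hC₁ _)⟩
      ⟨C₂, fun v => abs_wsum_le hw₂0 hw₂1 (fun b => hC₂ _)⟩
  simp only [Expec] at houter
  have hgl₁ : ∀ a : Ω₁, glueL ℓ w₂ X₂ A₁ ψ₁ (fun j => X₁ a j.1) = G₁ a := fun a => glueL_eval a ψ₁
  have hgl₂ : ∀ a : Ω₁, glueL ℓ w₂ X₂ A₂ ψ₂ (fun j => X₁ a j.1) = G₂ a := fun a => glueL_eval a ψ₂
  simp only [hgl₁, hgl₂] at houter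
  calc Expec (pairW w₁ w₂)
        (fun p => ψ₁ (fun i => pairVec ℓ X₁ X₂ p i.1) * ψ₂ (fun i => pairVec ℓ X₁ X₂ p i.1))
      = ∑ a, w₁ a * ∑ b, w₂ b * (ψ₁ (fun i => pairVec ℓ X₁ X₂ (a, b) i.1) *
          ψ₂ (fun i => pairVec ℓ X₁ X₂ (a, b) i.1)) := Expec_pairW _ _ _
    _ ≤ ∑ a, w₁ a * (G₁ a * G₂ a) := by
        apply Finset.sum_le_sum
        intro a _
        exact mul_le_mul_of_nonneg_left (inner a) (hw₁0 a)
    _ ≤ (∑ a, w₁ a * G₁ a) * (∑ a, w₁ a * G₂ a) := houter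
    _ = Expec (pairW w₁ w₂) (fun p => ψ₁ (fun i => pairVec ℓ X₁ X₂ p i.1)) *
          Expec (pairW w₁ w₂) (fun p => ψ₂ (fun i => pairVec ℓ X₁ X₂ p i.1)) := by
        rw [Expec_pairW, Expec_pairW]

end KTNA
namespace KTNA

set_option linter.unusedSectionVars false

variable {Ω₁ Ω₂ : Type*} [Fintype Ω₁] [Fintype Ω₂]

lemma scoreStep_true_left {ℓ : ℕ} {X₁ : Ω₁ → Fin (2^ℓ) → ℝ} {X₂ : Ω₂ → Fin (2^ℓ) → ℝ}
    {a : Ω₁} {b : Ω₂} {i : Fin (2^(ℓ+1))} (hi : i.1 < 2^ℓ) :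
    scoreStep ℓ X₁ X₂ (a, b, true) i = bumpFn ℓ (pairVec ℓ X₁ X₂ (a, b) i) := by
  simp [scoreStep, hi]

lemma scoreStep_false_left {ℓ : ℕ} {X₁ : Ω₁ → Fin (2^ℓ) → ℝ} {X₂ : Ω₂ → Fin (2^ℓ) → ℝ}
    {a : Ω₁} {b : Ω₂} {i : Fin (2^(ℓ+1))} (hi : i.1 < 2^ℓ) :
    scoreStep ℓ X₁ X₂ (a, b, false) i = pairVec ℓ X₁ X₂ (a, b) i := by
  simp [scoreStep, hi]

lemma scoreStep_true_right {ℓ : ℕ} {X₁ : Ω₁ → Fin (2^ℓ) → ℝ} {X₂ : Ω₂ → Fin (2^ℓ) → ℝ}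
    {a : Ω₁} {b : Ω₂} {i : Fin (2^(ℓ+1))} (hi : ¬ i.1 < 2^ℓ) :
    scoreStep ℓ X₁ X₂ (a, b, true) i = pairVec ℓ X₁ X₂ (a, b) i := by
  simp [scoreStep, hi]

lemma scoreStep_false_right {ℓ : ℕ} {X₁ : Ω₁ → Fin (2^ℓ) → ℝ} {X₂ : Ω₂ → Fin (2^ℓ) → ℝ}
    {a : Ω₁} {b : Ω₂} {i : Fin (2^(ℓ+1))} (hi : ¬ i.1 < 2^ℓ) :
    scoreStep ℓ X₁ X₂ (a, b, false) i = bumpFn ℓ (pairVec ℓ X₁ X₂ (a, b) i) := by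
  simp [scoreStep, hi]

lemma delta_sign {ℓ : ℕ} {X₁ : Ω₁ → Fin (2^ℓ) → ℝ} {X₂ : Ω₂ → Fin (2^ℓ) → ℝ}
    {c₁ : Ω₁ → Fin (2^ℓ)} {c₂ : Ω₂ → Fin (2^ℓ)}
    (hs₁ : Spec ℓ X₁ c₁) (hs₂ : Spec ℓ X₂ c₂)
    {A₁ A₂ : Finset (Fin (2^(ℓ+1)))} (hd : Disjoint A₁ A₂)
    {ψ₁ : ({i // i ∈ A₁} → ℝ) → ℝ} {ψ₂ : ({i // i ∈ A₂} → ℝ) → ℝ}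
    (hm₁ : Monotone ψ₁) (hm₂ : Monotone ψ₂) (a : Ω₁) (b : Ω₂) :
    (ψ₁ (fun i => scoreStep ℓ X₁ X₂ (a, b, true) i.1)
      - ψ₁ (fun i => scoreStep ℓ X₁ X₂ (a, b, false) i.1)) *
    (ψ₂ (fun i => scoreStep ℓ X₁ X₂ (a, b, true) i.1)
      - ψ₂ (fun i => scoreStep ℓ X₁ X₂ (a, b, false) i.1)) ≤ 0 := by
  set CL : Fin (2^(ℓ+1)) := finL ℓ (c₁ a) with hCL
  set CR : Fin (2^(ℓ+1)) := finR ℓ (c₂ b) with hCR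
  -- coordinates other than CL, CR agree between the two coin outcomes
  have hne : ∀ i : Fin (2^(ℓ+1)), i ≠ CL → i ≠ CR →
      scoreStep ℓ X₁ X₂ (a, b, true) i = scoreStep ℓ X₁ X₂ (a, b, false) i := by
    intro i h1 h2
    by_cases hi : i.1 < 2^ℓ
    · rw [scoreStep_true_left hi, scoreStep_false_left hi]
      have hpv : pairVec ℓ X₁ X₂ (a, b) i = X₁ a ⟨i.1, hi⟩ := dif_pos hi
      rcases hs₁ a ⟨i.1, hi⟩ with ⟨he, _⟩ | ⟨_, hs⟩
      · exfalso
        apply h1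
        apply Fin.ext
        show i.1 = (c₁ a).1
        rw [← he]
      · rw [hpv]; exact bumpFn_of_le ℓ hs
    · rw [scoreStep_true_right hi, scoreStep_false_right hi]
      have hpv : pairVec ℓ X₁ X₂ (a, b) i = X₂ b ⟨i.1 - 2^ℓ, ri_lt hi⟩ := dif_neg hi
      rcases hs₂ b ⟨i.1 - 2^ℓ, ri_lt hi⟩ with ⟨he, _⟩ | ⟨_, hs⟩
      · exfalso
        apply h2
        apply Fin.ext
        show i.1 = 2^ℓ + (c₂ b).1
        have : i.1 - 2^ℓ = (c₂ b).1 := by rw [← he]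
        omega
      · rw [hpv]; exact (bumpFn_of_le ℓ hs).symm
  have hCLval : CL.1 < 2^ℓ := (c₁ a).2
  have hCRval : ¬ CR.1 < 2^ℓ := by simp only [hCR, finR]; omega
  -- if CR is not in A then ψ(false) ≤ ψ(true)
  have key1 : ∀ (A : Finset (Fin (2^(ℓ+1)))) (ψ : ({i // i ∈ A} → ℝ) → ℝ),
      Monotone ψ → CR ∉ A →
      ψ (fun i => scoreStep ℓ X₁ X₂ (a, b, false) i.1)
        ≤ ψ (fun i => scoreStep ℓ X₁ X₂ (a, b, true) i.1) := by
    intro A ψ hm hA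
    apply hm
    intro i
    dsimp only
    by_cases hi : i.1.1 < 2^ℓ
    · rw [scoreStep_true_left hi, scoreStep_false_left hi]
      exact self_le_bumpFn ℓ _
    · have hcl : i.1 ≠ CL := by
        intro h
        apply hi
        rw [h]
        exact hCLval
      exact le_of_eq (hne i.1 hcl (fun h => hA (h ▸ i.2))).symm
  -- if CL is not in A then ψ(true) ≤ ψ(false)
  have key2 : ∀ (A : Finset (Fin (2^(ℓ+1)))) (ψ : ({i // i ∈ A} → ℝ) → ℝ),
      Monotone ψ → CL ∉ A →
      ψ (fun i => scoreStep ℓ X₁ X₂ (a, b, true) i.1)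
        ≤ ψ (fun i => scoreStep ℓ X₁ X₂ (a, b, false) i.1) := by
    intro A ψ hm hA
    apply hm
    intro i
    dsimp only
    by_cases hi : i.1.1 < 2^ℓ
    · have h1 : i.1 ≠ CL := fun h => hA (h ▸ i.2)
      have h2 : i.1 ≠ CR := by
        intro h
        apply hCRval
        rw [← h]
        exact hi
      exact le_of_eq (hne i.1 h1 h2)
    · rw [scoreStep_true_right hi, scoreStep_false_right hi]
      exact self_le_bumpFn ℓ _
  have hdl := Finset.disjoint_left.mp hd
  by_cases hCL1 : CL ∈ A₁
  · have hCL2 : CL ∉ A₂ := fun h => (Finset.disjoint_left.mp hd hCL1) h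
    by_cases hCR1 : CR ∈ A₁
    · have hCR2 : CR ∉ A₂ := fun h => (Finset.disjoint_left.mp hd hCR1) h
      have e1 := key1 A₂ ψ₂ hm₂ hCR2
      have e2 := key2 A₂ ψ₂ hm₂ hCL2
      have : (ψ₂ fun i => scoreStep ℓ X₁ X₂ (a, b, true) ↑i)
          = ψ₂ fun i => scoreStep ℓ X₁ X₂ (a, b, false) ↑i := le_antisymm e2 e1
      rw [this, sub_self, mul_zero]
    · have d1 := key1 A₁ ψ₁ hm₁ hCR1
      have d2 := key2 A₂ ψ₂ hm₂ hCL2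
      nlinarith
  · have d1 := key2 A₁ ψ₁ hm₁ hCL1
    by_cases hCR2 : CR ∈ A₂
    · have hCR1 : CR ∉ A₁ := fun h => (Finset.disjoint_left.mp hd h) hCR2
      have e1 := key1 A₁ ψ₁ hm₁ hCR1
      have : (ψ₁ fun i => scoreStep ℓ X₁ X₂ (a, b, true) ↑i)
          = ψ₁ fun i => scoreStep ℓ X₁ X₂ (a, b, false) ↑i := le_antisymm d1 e1
      rw [this, sub_self, zero_mul]
    · have d2 := key1 A₂ ψ₂ hm₂ hCR2
      nlinarith

/-! ### Averaging over the final coin -/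

def avgPsi (ℓ : ℕ) (A : Finset (Fin (2^(ℓ+1)))) (ψ : ({i // i ∈ A} → ℝ) → ℝ) :
    ({i // i ∈ A} → ℝ) → ℝ := fun u =>
  2⁻¹ * ψ (fun i => if i.1.1 < 2^ℓ then bumpFn ℓ (u i) else u i) +
  2⁻¹ * ψ (fun i => if i.1.1 < 2^ℓ then u i else bumpFn ℓ (u i))

lemma avgPsi_mono {ℓ : ℕ} {A : Finset (Fin (2^(ℓ+1)))} {ψ : ({i // i ∈ A} → ℝ) → ℝ}
    (hm : Monotone ψ) : Monotone (avgPsi ℓ A ψ) := by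
  intro u v huv
  unfold avgPsi
  have h1 : ψ (fun i => if i.1.1 < 2^ℓ then bumpFn ℓ (u i) else u i)
      ≤ ψ (fun i => if i.1.1 < 2^ℓ then bumpFn ℓ (v i) else v i) := by
    apply hm
    intro i
    dsimp only
    split
    · exact bumpFn_mono ℓ (huv i)
    · exact huv i
  have h2 : ψ (fun i => if i.1.1 < 2^ℓ then u i else bumpFn ℓ (u i))
      ≤ ψ (fun i => if i.1.1 < 2^ℓ then v i else bumpFn ℓ (v i)) := by
    apply hm
    intro i
    dsimp only
    split
    · exact huv i
    · exact bumpFn_mono ℓ (huv i)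
  nlinarith

lemma avgPsi_bdd {ℓ : ℕ} {A : Finset (Fin (2^(ℓ+1)))} {ψ : ({i // i ∈ A} → ℝ) → ℝ}
    {C : ℝ} (hC : ∀ v, |ψ v| ≤ C) : ∀ v, |avgPsi ℓ A ψ v| ≤ C := by
  intro v
  unfold avgPsi
  have h1 := hC (fun i => if i.1.1 < 2^ℓ then bumpFn ℓ (v i) else v i)
  have h2 := hC (fun i => if i.1.1 < 2^ℓ then v i else bumpFn ℓ (v i))
  rw [abs_le] at h1 h2 ⊢
  constructor <;> [nlinarith; nlinarith]

lemma avgPsi_eval {ℓ : ℕ} {X₁ : Ω₁ → Fin (2^ℓ) → ℝ} {X₂ : Ω₂ → Fin (2^ℓ) → ℝ}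
    (a : Ω₁) (b : Ω₂) {A : Finset (Fin (2^(ℓ+1)))} (ψ : ({i // i ∈ A} → ℝ) → ℝ) :
    avgPsi ℓ A ψ (fun i => pairVec ℓ X₁ X₂ (a, b) i.1)
      = 2⁻¹ * ψ (fun i => scoreStep ℓ X₁ X₂ (a, b, true) i.1)
        + 2⁻¹ * ψ (fun i => scoreStep ℓ X₁ X₂ (a, b, false) i.1) := by
  unfold avgPsi
  have e1 : (fun (i : {i // i ∈ A}) => if i.1.1 < 2^ℓ
        then bumpFn ℓ (pairVec ℓ X₁ X₂ (a, b) i.1) else pairVec ℓ X₁ X₂ (a, b) i.1)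
      = fun i => scoreStep ℓ X₁ X₂ (a, b, true) i.1 := by
    funext i
    by_cases hi : i.1.1 < 2^ℓ
    · rw [if_pos hi, scoreStep_true_left hi]
    · rw [if_neg hi, scoreStep_true_right hi]
  have e2 : (fun (i : {i // i ∈ A}) => if i.1.1 < 2^ℓ
        then pairVec ℓ X₁ X₂ (a, b) i.1 else bumpFn ℓ (pairVec ℓ X₁ X₂ (a, b) i.1))
      = fun i => scoreStep ℓ X₁ X₂ (a, b, false) i.1 := by
    funext i
    by_cases hi : i.1.1 < 2^ℓ
    · rw [if_pos hi, scoreStep_false_left hi]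
    · rw [if_neg hi, scoreStep_false_right hi]
  rw [e1, e2]

/-! ### The inductive step: adding the final match -/

theorem step_NA {ℓ : ℕ} {w₁ : Ω₁ → ℝ} {w₂ : Ω₂ → ℝ}
    {X₁ : Ω₁ → Fin (2^ℓ) → ℝ} {X₂ : Ω₂ → Fin (2^ℓ) → ℝ}
    {c₁ : Ω₁ → Fin (2^ℓ)} {c₂ : Ω₂ → Fin (2^ℓ)}
    (hw₁0 : ∀ a, 0 ≤ w₁ a) (hw₁1 : ∑ a, w₁ a = 1)
    (hw₂0 : ∀ b, 0 ≤ w₂ b) (hw₂1 : ∑ b, w₂ b = 1)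
    (hs₁ : Spec ℓ X₁ c₁) (hs₂ : Spec ℓ X₂ c₂)
    (h₁ : IsNAfin w₁ X₁) (h₂ : IsNAfin w₂ X₂) :
    IsNAfin (tripW w₁ w₂) (scoreStep ℓ X₁ X₂) := by
  intro A₁ A₂ hd ψ₁ ψ₂ hm₁ hm₂ hb₁ hb₂
  obtain ⟨C₁, hC₁⟩ := hb₁
  obtain ⟨C₂, hC₂⟩ := hb₂
  have hpw0 : ∀ p : Ω₁ × Ω₂, 0 ≤ pairW w₁ w₂ p :=
    fun p => mul_nonneg (hw₁0 p.1) (hw₂0 p.2)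
  have hconc := concat_NA hw₁0 hw₁1 hw₂0 hw₂1 h₁ h₂ A₁ A₂ hd
    (avgPsi ℓ A₁ ψ₁) (avgPsi ℓ A₂ ψ₂) (avgPsi_mono hm₁) (avgPsi_mono hm₂)
    ⟨C₁, avgPsi_bdd hC₁⟩ ⟨C₂, avgPsi_bdd hC₂⟩
  calc Expec (tripW w₁ w₂) (fun p => ψ₁ (fun i => scoreStep ℓ X₁ X₂ p i.1) *
        ψ₂ (fun i => scoreStep ℓ X₁ X₂ p i.1))
      = ∑ p : Ω₁ × Ω₂, pairW w₁ w₂ p *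
          (2⁻¹ * (ψ₁ (fun i => scoreStep ℓ X₁ X₂ (p.1, p.2, true) i.1) *
            ψ₂ (fun i => scoreStep ℓ X₁ X₂ (p.1, p.2, true) i.1)) +
           2⁻¹ * (ψ₁ (fun i => scoreStep ℓ X₁ X₂ (p.1, p.2, false) i.1) *
            ψ₂ (fun i => scoreStep ℓ X₁ X₂ (p.1, p.2, false) i.1))) := Expec_tripW _ _ _
    _ ≤ ∑ p : Ω₁ × Ω₂, pairW w₁ w₂ p *
          (avgPsi ℓ A₁ ψ₁ (fun i => pairVec ℓ X₁ X₂ p i.1) *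
           avgPsi ℓ A₂ ψ₂ (fun i => pairVec ℓ X₁ X₂ p i.1)) := by
        apply Finset.sum_le_sum
        rintro ⟨a, b⟩ _
        apply mul_le_mul_of_nonneg_left _ (hpw0 (a, b))
        dsimp only
        rw [avgPsi_eval a b ψ₁, avgPsi_eval a b ψ₂]
        have hds := delta_sign hs₁ hs₂ hd hm₁ hm₂ a b
        nlinarith [hds]
    _ = Expec (pairW w₁ w₂) (fun p => avgPsi ℓ A₁ ψ₁ (fun i => pairVec ℓ X₁ X₂ p i.1) *
          avgPsi ℓ A₂ ψ₂ (fun i => pairVec ℓ X₁ X₂ p i.1)) := rfl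
    _ ≤ Expec (pairW w₁ w₂) (fun p => avgPsi ℓ A₁ ψ₁ (fun i => pairVec ℓ X₁ X₂ p i.1)) *
          Expec (pairW w₁ w₂) (fun p => avgPsi ℓ A₂ ψ₂ (fun i => pairVec ℓ X₁ X₂ p i.1)) := hconc
    _ = Expec (tripW w₁ w₂) (fun p => ψ₁ (fun i => scoreStep ℓ X₁ X₂ p i.1)) *
          Expec (tripW w₁ w₂) (fun p => ψ₂ (fun i => scoreStep ℓ X₁ X₂ p i.1)) := by
        congr 1
        · rw [Expec_tripW]
          apply Finset.sum_congr rfl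
          rintro ⟨a, b⟩ _
          dsimp only
          rw [avgPsi_eval a b ψ₁]
        · rw [Expec_tripW]
          apply Finset.sum_congr rfl
          rintro ⟨a, b⟩ _
          dsimp only
          rw [avgPsi_eval a b ψ₂]

end KTNA
namespace KTNA

def coinR (ℓ : ℕ) : Fin (ℓ+1) := ⟨ℓ, Nat.lt_succ_self ℓ⟩
def coinB (ℓ : ℕ) : Fin (2^(ℓ+1-1)) := ⟨0, by positivity⟩

/-! ### Restriction of a tournament to its two halves -/

lemma pow_sub_le {ℓ r : ℕ} : 2^(ℓ-1-r) ≤ 2^(ℓ-1) :=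
  Nat.pow_le_pow_right (by norm_num) (by omega)

lemma pow_half {ℓ : ℕ} (h : 1 ≤ ℓ) : 2^(ℓ-1) + 2^(ℓ-1) = 2^ℓ := by
  rw [← two_mul, ← pow_succ']
  congr 1
  omega

def restrictL (ℓ : ℕ) (ω : TournOmega (ℓ+1)) : TournOmega ℓ := fun r b =>
  ω ⟨r.1, by omega⟩
    ⟨if b.1 < 2^(ℓ-1-r.1) then b.1 else b.1 + 2^(ℓ-1-r.1), by
      have hb := b.2
      have hr := r.2
      have h1 : 2^(ℓ-1-r.1) ≤ 2^(ℓ-1) := pow_sub_le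
      have h2 : 2^(ℓ-1) + 2^(ℓ-1) = 2^ℓ := pow_half (by omega)
      simp only [Nat.add_sub_cancel]
      split <;> omega⟩

def restrictR (ℓ : ℕ) (ω : TournOmega (ℓ+1)) : TournOmega ℓ := fun r b =>
  ω ⟨r.1, by omega⟩
    ⟨if b.1 < 2^(ℓ-1-r.1) then b.1 + 2^(ℓ-1-r.1) else b.1 + 2^(ℓ-1), by
      have hb := b.2
      have hr := r.2
      have h1 : 2^(ℓ-1-r.1) ≤ 2^(ℓ-1) := pow_sub_le
      have h2 : 2^(ℓ-1) + 2^(ℓ-1) = 2^ℓ := pow_half (by omega)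
      simp only [Nat.add_sub_cancel]
      split <;> omega⟩

/-- The winner of a left-half block is computed by the restricted tournament. -/
lemma winner_left (ℓ : ℕ) (ω : TournOmega (ℓ+1)) :
    ∀ r : ℕ, r ≤ ℓ → ∀ b : ℕ, b < 2^(ℓ-r) →
      tournWinner (ℓ+1) ω r b = tournWinner ℓ (restrictL ℓ ω) r b := by
  intro r
  induction r with
  | zero => intro _ b _; rfl
  | succ r ih =>
    intro hr b hb
    have hpow : 2^(ℓ-r) = 2^(ℓ-(r+1)) + 2^(ℓ-(r+1)) := by
      have he : ℓ - r = (ℓ-(r+1)) + 1 := by omega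
      rw [he, pow_succ]
      omega
    have hps : 2^(ℓ-(r+1)) ≤ 2^(ℓ-1) := Nat.pow_le_pow_right (by norm_num) (by omega)
    have hh : 2^(ℓ-1) + 2^(ℓ-1) = 2^ℓ := pow_half (by omega)
    have hbig : r < ℓ+1 ∧ b < 2^(ℓ+1-1) := ⟨by omega, by simp only [Nat.add_sub_cancel]; omega⟩
    have hsml : r < ℓ ∧ b < 2^(ℓ-1) := ⟨by omega, by omega⟩
    rw [tournWinner, tournWinner, dif_pos hbig, dif_pos hsml]
    have hbit : restrictL ℓ ω ⟨r, hsml.1⟩ ⟨b, hsml.2⟩ = ω ⟨r, hbig.1⟩ ⟨b, hbig.2⟩ := by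
      have hc : b < 2^(ℓ-1-r) := by
        have he2 : ℓ-1-r = ℓ-(r+1) := by omega
        rw [he2]; exact hb
      simp only [restrictL, if_pos hc]
    rw [hbit]
    cases hω : ω ⟨r, hbig.1⟩ ⟨b, hbig.2⟩ <;>
      simp only [if_true, if_false, Bool.false_eq_true] <;>
      [exact ih (by omega) (2*b+1) (by omega); exact ih (by omega) (2*b) (by omega)]

/-- The winner of a right-half block is computed by the restricted tournament. -/
lemma winner_right (ℓ : ℕ) (ω : TournOmega (ℓ+1)) :
    ∀ r : ℕ, r ≤ ℓ → ∀ b : ℕ, b < 2^(ℓ-r) →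
      tournWinner (ℓ+1) ω r (b + 2^(ℓ-r)) = 2^ℓ + tournWinner ℓ (restrictR ℓ ω) r b := by
  intro r
  induction r with
  | zero => intro _ b _; simp [tournWinner, Nat.add_comm]
  | succ r ih =>
    intro hr b hb
    have hpow : 2^(ℓ-r) = 2^(ℓ-(r+1)) + 2^(ℓ-(r+1)) := by
      have he : ℓ - r = (ℓ-(r+1)) + 1 := by omega
      rw [he, pow_succ]
      omega
    have hps : 2^(ℓ-(r+1)) ≤ 2^(ℓ-1) := Nat.pow_le_pow_right (by norm_num) (by omega)
    have hpr : 2^(ℓ-r) ≤ 2^ℓ := Nat.pow_le_pow_right (by norm_num) (by omega)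
    have hh : 2^(ℓ-1) + 2^(ℓ-1) = 2^ℓ := pow_half (by omega)
    have hbig : r < ℓ+1 ∧ b + 2^(ℓ-(r+1)) < 2^(ℓ+1-1) :=
      ⟨by omega, by simp only [Nat.add_sub_cancel]; omega⟩
    have hsml : r < ℓ ∧ b < 2^(ℓ-1) := ⟨by omega, by omega⟩
    rw [tournWinner, tournWinner, dif_pos hbig, dif_pos hsml]
    have hc : b < 2^(ℓ-1-r) := by
      have he2 : ℓ-1-r = ℓ-(r+1) := by omega
      rw [he2]; exact hb
    have hbit : restrictR ℓ ω ⟨r, hsml.1⟩ ⟨b, hsml.2⟩ = ω ⟨r, hbig.1⟩ ⟨b + 2^(ℓ-(r+1)), hbig.2⟩ := by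
      have he3 : ℓ-1-r = ℓ-(r+1) := by omega
      simp only [restrictR, he3, if_pos hb]
    rw [hbit]
    have e1 : 2 * (b + 2^(ℓ-(r+1))) = 2*b + 2^(ℓ-r) := by omega
    have e2 : 2 * (b + 2^(ℓ-(r+1))) + 1 = (2*b+1) + 2^(ℓ-r) := by omega
    cases hω : ω ⟨r, hbig.1⟩ ⟨b + 2^(ℓ-(r+1)), hbig.2⟩ <;>
      simp only [if_true, if_false, Bool.false_eq_true]
    · rw [e2]
      exact ih (by omega) (2*b+1) (by omega)
    · rw [e1]
      exact ih (by omega) (2*b) (by omega)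

end KTNA
namespace KTNA

lemma div_lt_pow_sub {ℓ r x : ℕ} (hx : x < 2^ℓ) (hr : r ≤ ℓ) : x / 2^r < 2^(ℓ-r) := by
  apply Nat.div_lt_of_lt_mul
  have h2 : 2^r * 2^(ℓ-r) = 2^ℓ := by
    rw [← pow_add]
    congr 1
    omega
  rw [h2]
  exact hx

lemma final_winner (ℓ : ℕ) (ω : TournOmega (ℓ+1)) :
    tournWinner (ℓ+1) ω (ℓ+1) 0
      = if ω (coinR ℓ) (coinB ℓ) then tournWinner ℓ (restrictL ℓ ω) ℓ 0
        else 2^ℓ + tournWinner ℓ (restrictR ℓ ω) ℓ 0 := by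
  have hg : ℓ < ℓ+1 ∧ 0 < 2^(ℓ+1-1) := ⟨by omega, by positivity⟩
  rw [tournWinner, dif_pos hg]
  have w0 : tournWinner (ℓ+1) ω ℓ (2*0) = tournWinner ℓ (restrictL ℓ ω) ℓ 0 := by
    rw [mul_zero]
    exact winner_left ℓ ω ℓ le_rfl 0 (by positivity)
  have w1 : tournWinner (ℓ+1) ω ℓ (2*0+1) = 2^ℓ + tournWinner ℓ (restrictR ℓ ω) ℓ 0 := by
    have hwr := winner_right ℓ ω ℓ le_rfl 0 (by positivity)
    rw [show (0 + 2^(ℓ-ℓ) : ℕ) = 2*0+1 by rw [Nat.sub_self, pow_zero]] at hwr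
    exact hwr
  rw [w0, w1]
  rfl

lemma tournScore_split_left (ℓ : ℕ) (ω : TournOmega (ℓ+1)) (i : Fin (2^(ℓ+1)))
    (hi : i.1 < 2^ℓ) :
    tournScore (ℓ+1) ω i
      = tournScore ℓ (restrictL ℓ ω) ⟨i.1, hi⟩
        + (if ω (coinR ℓ) (coinB ℓ) = true
             ∧ tournWinner ℓ (restrictL ℓ ω) ℓ 0 = i.1 then 1 else 0) := by
  have hmem : (ℓ+1) ∉ Icc 1 ℓ := by
    rw [mem_Icc]
    omega
  have hIcc : Icc 1 (ℓ+1) = insert (ℓ+1) (Icc 1 ℓ) := (Finset.insert_Icc_right_eq_Icc_add_one (by omega)).symm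
  have hfil : (Icc 1 ℓ).filter (fun r => tournWinner (ℓ+1) ω r (i.1 / 2^r) = i.1)
      = (Icc 1 ℓ).filter (fun r =>
          tournWinner ℓ (restrictL ℓ ω) r ((⟨i.1, hi⟩ : Fin (2^ℓ)).1 / 2^r)
            = (⟨i.1, hi⟩ : Fin (2^ℓ)).1) := by
    apply Finset.filter_congr
    intro r hr
    rw [mem_Icc] at hr
    rw [winner_left ℓ ω r (by omega) _ (div_lt_pow_sub hi (by omega))]
  have hdiv0 : i.1 / 2^(ℓ+1) = 0 := Nat.div_eq_of_lt i.2
  have hiff : (tournWinner (ℓ+1) ω (ℓ+1) (i.1 / 2^(ℓ+1)) = i.1)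
      ↔ (ω (coinR ℓ) (coinB ℓ) = true
          ∧ tournWinner ℓ (restrictL ℓ ω) ℓ 0 = i.1) := by
    rw [hdiv0, final_winner ℓ ω]
    cases hc : ω (coinR ℓ) (coinB ℓ)
    · simp only [Bool.false_eq_true, if_false, false_and, iff_false]
      omega
    · simp only [if_true, true_and]
  unfold tournScore
  rw [hIcc, Finset.filter_insert]
  by_cases hP : tournWinner (ℓ+1) ω (ℓ+1) (i.1 / 2^(ℓ+1)) = i.1
  · rw [if_pos hP,
      Finset.card_insert_of_notMem (fun hmem' => hmem (Finset.mem_of_mem_filter _ hmem')),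
      hfil, if_pos (hiff.mp hP)]
    push_cast
    ring
  · rw [if_neg hP, hfil, if_neg (fun hc => hP (hiff.mpr hc))]
    push_cast
    ring

lemma tournScore_split_right (ℓ : ℕ) (ω : TournOmega (ℓ+1)) (i : Fin (2^(ℓ+1)))
    (hi : ¬ i.1 < 2^ℓ) (hWL : tournWinner ℓ (restrictL ℓ ω) ℓ 0 < 2^ℓ) :
    tournScore (ℓ+1) ω i
      = tournScore ℓ (restrictR ℓ ω) ⟨i.1 - 2^ℓ, ri_lt hi⟩
        + (if ω (coinR ℓ) (coinB ℓ) = false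
             ∧ tournWinner ℓ (restrictR ℓ ω) ℓ 0 = i.1 - 2^ℓ then 1 else 0) := by
  have hx : i.1 - 2^ℓ < 2^ℓ := ri_lt hi
  have hmem : (ℓ+1) ∉ Icc 1 ℓ := by
    rw [mem_Icc]
    omega
  have hIcc : Icc 1 (ℓ+1) = insert (ℓ+1) (Icc 1 ℓ) := (Finset.insert_Icc_right_eq_Icc_add_one (by omega)).symm
  have hfil : (Icc 1 ℓ).filter (fun r => tournWinner (ℓ+1) ω r (i.1 / 2^r) = i.1)
      = (Icc 1 ℓ).filter (fun r =>
          tournWinner ℓ (restrictR ℓ ω) r ((⟨i.1 - 2^ℓ, ri_lt hi⟩ : Fin (2^ℓ)).1 / 2^r)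
            = (⟨i.1 - 2^ℓ, ri_lt hi⟩ : Fin (2^ℓ)).1) := by
    apply Finset.filter_congr
    intro r hr
    rw [mem_Icc] at hr
    have hsplit : i.1 / 2^r = (i.1 - 2^ℓ) / 2^r + 2^(ℓ-r) := by
      have hpk : 2^(ℓ-r) * 2^r = 2^ℓ := by
        rw [← pow_add]
        congr 1
        omega
      have h1 : i.1 = (i.1 - 2^ℓ) + 2^(ℓ-r) * 2^r := by omega
      conv_lhs => rw [h1]
      rw [Nat.add_mul_div_right _ _ (by positivity : 0 < 2^r)]
    rw [hsplit, winner_right ℓ ω r (by omega) _ (div_lt_pow_sub hx (by omega))]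
    have hv : ((⟨i.1 - 2^ℓ, ri_lt hi⟩ : Fin (2^ℓ)) : ℕ) = i.1 - 2^ℓ := rfl
    rw [hv]
    omega
  have hdiv0 : i.1 / 2^(ℓ+1) = 0 := Nat.div_eq_of_lt i.2
  have hiff : (tournWinner (ℓ+1) ω (ℓ+1) (i.1 / 2^(ℓ+1)) = i.1)
      ↔ (ω (coinR ℓ) (coinB ℓ) = false
          ∧ tournWinner ℓ (restrictR ℓ ω) ℓ 0 = i.1 - 2^ℓ) := by
    rw [hdiv0, final_winner ℓ ω]
    cases hc : ω (coinR ℓ) (coinB ℓ)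
    · simp only [Bool.false_eq_true, if_false, true_and]
      omega
    · simp only [if_true, Bool.true_eq_false, false_and, iff_false]
      omega
  unfold tournScore
  rw [hIcc, Finset.filter_insert]
  by_cases hP : tournWinner (ℓ+1) ω (ℓ+1) (i.1 / 2^(ℓ+1)) = i.1
  · rw [if_pos hP,
      Finset.card_insert_of_notMem (fun hmem' => hmem (Finset.mem_of_mem_filter _ hmem')),
      hfil, if_pos (hiff.mp hP)]
    push_cast
    ring
  · rw [if_neg hP, hfil, if_neg (fun hc => hP (hiff.mpr hc))]
    push_cast
    ring

end KTNA
namespace KTNA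

def padFun (ℓ : ℕ) (ω : TournOmega (ℓ+1)) : Fin (2^ℓ - 1) → Bool := fun j =>
  ω ⟨ℓ, by omega⟩ ⟨j.1 + 1, by have := j.2; simp only [Nat.add_sub_cancel]; omega⟩

def bigSplit (ℓ : ℕ) (ω : TournOmega (ℓ+1)) :
    TournOmega ℓ × TournOmega ℓ × Bool × (Fin (2^ℓ - 1) → Bool) :=
  (restrictL ℓ ω, restrictR ℓ ω, ω (coinR ℓ) (coinB ℓ), padFun ℓ ω)

lemma bigSplit_inj (ℓ : ℕ) : Function.Injective (bigSplit ℓ) := by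
  intro ω ω' h
  have hL : restrictL ℓ ω = restrictL ℓ ω' := congrArg Prod.fst h
  have hR : restrictR ℓ ω = restrictR ℓ ω' := congrArg (fun p => p.2.1) h
  have hc : ω (coinR ℓ) (coinB ℓ) = ω' (coinR ℓ) (coinB ℓ) :=
    congrArg (fun p => p.2.2.1) h
  have hp : padFun ℓ ω = padFun ℓ ω' := congrArg (fun p => p.2.2.2) h
  suffices hs : ∀ (rv : ℕ) (hrv : rv < ℓ+1) (bv : ℕ) (hbv : bv < 2^(ℓ+1-1)),
      ω ⟨rv, hrv⟩ ⟨bv, hbv⟩ = ω' ⟨rv, hrv⟩ ⟨bv, hbv⟩ by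
    funext r b
    exact hs r.1 r.2 b.1 b.2
  intro rv hrv bv hbv
  have hbv' : bv < 2^ℓ := by simpa using hbv
  by_cases hr : rv < ℓ
  · -- a first-ℓ-rounds coordinate
    have hps : 2^(ℓ-1-rv) ≤ 2^(ℓ-1) := pow_sub_le
    have hh : 2^(ℓ-1) + 2^(ℓ-1) = 2^ℓ := pow_half (by omega)
    have hpos : 0 < 2^(ℓ-1-rv) := by positivity
    have hpos2 : 0 < 2^(ℓ-1) := by positivity
    by_cases h1 : bv < 2^(ℓ-1-rv)
    · have t := congrFun (congrFun hL ⟨rv, hr⟩) ⟨bv, by omega⟩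
      simp only [restrictL, h1, if_true] at t
      exact t
    · by_cases h2 : bv < 2^(ℓ-1-rv) + 2^(ℓ-1-rv)
      · have hlt : bv - 2^(ℓ-1-rv) < 2^(ℓ-1-rv) := by omega
        have t := congrFun (congrFun hR ⟨rv, hr⟩) ⟨bv - 2^(ℓ-1-rv), by omega⟩
        simp only [restrictR, hlt, if_true] at t
        convert t using 2 <;> exact Fin.ext (by first | omega | (simp; omega))
      · by_cases h3 : bv < 2^(ℓ-1) + 2^(ℓ-1-rv)
        · have hlt : ¬ (bv - 2^(ℓ-1-rv) < 2^(ℓ-1-rv)) := by omega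
          have t := congrFun (congrFun hL ⟨rv, hr⟩) ⟨bv - 2^(ℓ-1-rv), by omega⟩
          simp only [restrictL, hlt, if_false] at t
          convert t using 2 <;> exact Fin.ext (by first | omega | (simp; omega))
        · have hlt : ¬ (bv - 2^(ℓ-1) < 2^(ℓ-1-rv)) := by omega
          have t := congrFun (congrFun hR ⟨rv, hr⟩) ⟨bv - 2^(ℓ-1), by omega⟩
          simp only [restrictR, hlt, if_false] at t
          convert t using 2 <;> exact Fin.ext (by first | omega | (simp; omega))
  · -- the last round : coin or padding
    have hre : rv = ℓ := by omega
    subst hre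
    by_cases hb0 : bv = 0
    · subst hb0
      exact hc
    · have t := congrFun hp ⟨bv - 1, by omega⟩
      simp only [padFun] at t
      convert t using 2 <;> exact Fin.ext (by first | omega | (simp; omega))

lemma card_big (ℓ : ℕ) :
    Fintype.card (TournOmega (ℓ+1))
      = 2 * Fintype.card (Fin (2^ℓ - 1) → Bool) *
          (Fintype.card (TournOmega ℓ) * Fintype.card (TournOmega ℓ)) := by
  have h1 : Fintype.card (TournOmega (ℓ+1)) = (2^(2^ℓ))^(ℓ+1) := by
    simp [Fintype.card_fun]
  have h2 : Fintype.card (TournOmega ℓ) = (2^(2^(ℓ-1)))^ℓ := by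
    simp [Fintype.card_fun]
  have h3 : Fintype.card (Fin (2^ℓ - 1) → Bool) = 2^(2^ℓ - 1) := by
    simp [Fintype.card_fun]
  rw [h1, h2, h3]
  rw [← pow_mul, ← pow_mul, ← pow_add]
  have h4 : 2 * 2^(2^ℓ - 1) = 2^(2^ℓ) := by
    have hp : (0:ℕ) < 2^ℓ := by positivity
    have h5 : 2^ℓ - 1 + 1 = 2^ℓ := by omega
    calc 2 * 2^(2^ℓ - 1) = 2^(2^ℓ - 1) * 2 := by ring
      _ = 2^(2^ℓ - 1 + 1) := (pow_succ 2 _).symm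
      _ = 2^(2^ℓ) := by rw [h5]
  rw [h4, ← pow_add]
  congr 1
  rcases ℓ with _ | k
  · norm_num
  · have hk : 2^(k+1) = 2^k * 2 := pow_succ 2 k
    have hk2 : (k+1) - 1 = k := by omega
    rw [hk2, hk]
    ring

end KTNA
namespace KTNA

/-! ### Pushforward of the uniform measure on match outcomes -/

theorem step_push {ℓ : ℕ} {Ω : Type} [Fintype Ω] (w : Ω → ℝ) (toFun : TournOmega ℓ → Ω)
    (hpush : ∀ f : Ω → ℝ, Expec (tournUnif ℓ) (fun ω => f (toFun ω)) = Expec w f)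
    (f : Ω × Ω × Bool → ℝ) :
    Expec (tournUnif (ℓ+1)) (fun ω =>
        f (toFun (restrictL ℓ ω), toFun (restrictR ℓ ω), ω (coinR ℓ) (coinB ℓ)))
      = Expec (tripW w w) f := by
  set T : ℝ := (Fintype.card (TournOmega ℓ) : ℝ) with hT
  set P : ℝ := (Fintype.card (Fin (2^ℓ - 1) → Bool) : ℝ) with hP
  have hTpos : 0 < T := by
    rw [hT]
    exact_mod_cast Fintype.card_pos
  have hPpos : 0 < P := by
    rw [hP]
    exact_mod_cast Fintype.card_pos
  have hbij : Function.Bijective (bigSplit ℓ) := by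
    rw [Fintype.bijective_iff_injective_and_card]
    refine ⟨bigSplit_inj ℓ, ?_⟩
    simp only [Fintype.card_prod, Fintype.card_bool]
    rw [card_big ℓ]
    ring
  have hpull : ∀ h : Ω → ℝ, ∑ x : TournOmega ℓ, h (toFun x) = T * Expec w h := by
    intro h
    have hh := hpush h
    simp only [Expec, tournUnif] at hh
    rw [← Finset.mul_sum] at hh
    rw [Expec, ← hh, hT]
    field_simp
  have key : ∑ ω : TournOmega (ℓ+1),
        f (toFun (restrictL ℓ ω), toFun (restrictR ℓ ω), ω (coinR ℓ) (coinB ℓ))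
      = 2 * P * T * T * Expec (tripW w w) f := by
    calc ∑ ω : TournOmega (ℓ+1),
          f (toFun (restrictL ℓ ω), toFun (restrictR ℓ ω), ω (coinR ℓ) (coinB ℓ))
        = ∑ q : TournOmega ℓ × TournOmega ℓ × Bool × (Fin (2^ℓ - 1) → Bool),
            f (toFun q.1, toFun q.2.1, q.2.2.1) :=
          Fintype.sum_bijective (bigSplit ℓ) hbij _ _ (fun ω => rfl)
      _ = ∑ x : TournOmega ℓ, ∑ y : TournOmega ℓ, ∑ c : Bool, ∑ _p : Fin (2^ℓ - 1) → Bool,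
            f (toFun x, toFun y, c) := by
          simp only [Fintype.sum_prod_type]
      _ = ∑ x : TournOmega ℓ, ∑ y : TournOmega ℓ,
            (P * f (toFun x, toFun y, true) + P * f (toFun x, toFun y, false)) := by
          apply Finset.sum_congr rfl
          intro x _
          apply Finset.sum_congr rfl
          intro y _
          rw [Fintype.sum_bool]
          simp only [Finset.sum_const, Finset.card_univ, nsmul_eq_mul]
          rw [hP]
      _ = T * Expec w (fun a => ∑ y : TournOmega ℓ,
            (P * f (a, toFun y, true) + P * f (a, toFun y, false))) :=
          hpull (fun a => ∑ y : TournOmega ℓ,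
            (P * f (a, toFun y, true) + P * f (a, toFun y, false)))
      _ = T * ∑ a, w a * (T * Expec w (fun b => P * f (a, b, true) + P * f (a, b, false))) := by
          rw [Expec]
          congr 1
          apply Finset.sum_congr rfl
          intro a _
          rw [hpull (fun b => P * f (a, b, true) + P * f (a, b, false))]
      _ = 2 * P * T * T * Expec (tripW w w) f := by
          rw [Expec_tripW w w f, Fintype.sum_prod_type]
          simp only [Expec, Finset.mul_sum]
          apply Finset.sum_congr rfl
          intro a _
          apply Finset.sum_congr rfl
          intro b _
          simp only [pairW]
          ring
  have hT1 : (Fintype.card (TournOmega (ℓ+1)) : ℝ) = 2 * P * (T * T) := by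
    rw [card_big ℓ, hP, hT]
    push_cast
    ring
  calc Expec (tournUnif (ℓ+1)) (fun ω =>
          f (toFun (restrictL ℓ ω), toFun (restrictR ℓ ω), ω (coinR ℓ) (coinB ℓ)))
      = (Fintype.card (TournOmega (ℓ+1)) : ℝ)⁻¹ * ∑ ω : TournOmega (ℓ+1),
          f (toFun (restrictL ℓ ω), toFun (restrictR ℓ ω), ω (coinR ℓ) (coinB ℓ)) := by
        simp only [Expec, tournUnif]
        rw [← Finset.mul_sum]
    _ = (Fintype.card (TournOmega (ℓ+1)) : ℝ)⁻¹ * (2 * P * T * T * Expec (tripW w w) f) := by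
        rw [key]
    _ = Expec (tripW w w) f := by
        rw [hT1]
        have h2 : (2 * P * (T * T)) ≠ 0 := by positivity
        field_simp

/-! ### The inductive model -/

structure GoodModel (ℓ : ℕ) where
  Ω : Type
  [inst : Fintype Ω]
  w : Ω → ℝ
  X : Ω → Fin (2^ℓ) → ℝ
  champ : Ω → Fin (2^ℓ)
  hw0 : ∀ a, 0 ≤ w a
  hw1 : ∑ a, w a = 1
  hspec : Spec ℓ X champ
  hNA : IsNAfin w X
  toFun : TournOmega ℓ → Ω
  hscore : ∀ ω i, tournScore ℓ ω i = X (toFun ω) i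
  hwin : ∀ ω, tournWinner ℓ ω ℓ 0 = (champ (toFun ω)).1
  hpush : ∀ f : Ω → ℝ, Expec (tournUnif ℓ) (fun ω => f (toFun ω)) = Expec w f

attribute [instance] GoodModel.inst

def baseModel : GoodModel 0 where
  Ω := PUnit
  w := fun _ => 1
  X := fun _ _ => 0
  champ := fun _ => ⟨0, by norm_num⟩
  hw0 := fun _ => zero_le_one
  hw1 := by simp
  hspec := by
    intro a i
    left
    constructor
    · apply Fin.ext
      have := i.2
      omega
    · norm_num
  hNA := by
    intro A₁ A₂ hd ψ₁ ψ₂ hm₁ hm₂ hb₁ hb₂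
    simp only [Expec]
    apply le_of_eq
    rw [Fintype.sum_unique, Fintype.sum_unique, Fintype.sum_unique]
    ring
  toFun := fun _ => PUnit.unit
  hscore := by
    intro ω i
    unfold tournScore
    rw [Finset.Icc_eq_empty (by omega)]
    simp
  hwin := fun ω => rfl
  hpush := by
    intro f
    have hcard : Fintype.card (TournOmega 0) = 1 := by simp [Fintype.card_fun]
    simp [Expec, tournUnif, hcard]

def stepModel {ℓ : ℕ} (M : GoodModel ℓ) : GoodModel (ℓ+1) where
  Ω := M.Ω × M.Ω × Bool
  w := tripW M.w M.w
  X := scoreStep ℓ M.X M.X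
  champ := champStep ℓ M.champ M.champ
  hw0 := tripW_nonneg M.hw0 M.hw0
  hw1 := sum_tripW M.hw1 M.hw1
  hspec := spec_step M.hspec M.hspec
  hNA := step_NA M.hw0 M.hw1 M.hw0 M.hw1 M.hspec M.hspec M.hNA M.hNA
  toFun := fun ω => (M.toFun (restrictL ℓ ω), M.toFun (restrictR ℓ ω), ω (coinR ℓ) (coinB ℓ))
  hscore := by
    intro ω i
    by_cases hi : i.1 < 2^ℓ
    · rw [tournScore_split_left ℓ ω i hi, M.hscore (restrictL ℓ ω) ⟨i.1, hi⟩,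
        M.hwin (restrictL ℓ ω)]
      have hpv : pairVec ℓ M.X M.X (M.toFun (restrictL ℓ ω), M.toFun (restrictR ℓ ω)) i
          = M.X (M.toFun (restrictL ℓ ω)) ⟨i.1, hi⟩ := dif_pos hi
      cases hcoin : ω (coinR ℓ) (coinB ℓ)
      · rw [scoreStep_false_left hi, hpv, if_neg (by simp)]
        ring
      · rw [scoreStep_true_left hi, hpv]
        rcases M.hspec (M.toFun (restrictL ℓ ω)) ⟨i.1, hi⟩ with ⟨he, hs⟩ | ⟨hne, hs⟩
        · rw [if_pos ⟨rfl, by rw [← he]⟩, hs, bumpFn_champ]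
        · rw [if_neg (fun hcon => hne (Fin.ext hcon.2.symm)), bumpFn_of_le ℓ hs]
          ring
    · have hWL : tournWinner ℓ (restrictL ℓ ω) ℓ 0 < 2^ℓ := by
        rw [M.hwin (restrictL ℓ ω)]
        exact (M.champ (M.toFun (restrictL ℓ ω))).2
      rw [tournScore_split_right ℓ ω i hi hWL,
        M.hscore (restrictR ℓ ω) ⟨i.1 - 2^ℓ, ri_lt hi⟩, M.hwin (restrictR ℓ ω)]
      have hpv : pairVec ℓ M.X M.X (M.toFun (restrictL ℓ ω), M.toFun (restrictR ℓ ω)) i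
          = M.X (M.toFun (restrictR ℓ ω)) ⟨i.1 - 2^ℓ, ri_lt hi⟩ := dif_neg hi
      cases hcoin : ω (coinR ℓ) (coinB ℓ)
      · rw [scoreStep_false_right hi, hpv]
        rcases M.hspec (M.toFun (restrictR ℓ ω)) ⟨i.1 - 2^ℓ, ri_lt hi⟩ with ⟨he, hs⟩ | ⟨hne, hs⟩
        · rw [if_pos ⟨rfl, by rw [← he]⟩, hs, bumpFn_champ]
        · rw [if_neg (fun hcon => hne (Fin.ext hcon.2.symm)), bumpFn_of_le ℓ hs]
          ring
      · rw [scoreStep_true_right hi, hpv, if_neg (by simp)]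
        ring
  hwin := by
    intro ω
    rw [final_winner ℓ ω, M.hwin (restrictL ℓ ω), M.hwin (restrictR ℓ ω)]
    cases hcoin : ω (coinR ℓ) (coinB ℓ) <;>
      simp [champStep, finL, finR, hcoin]
  hpush := step_push M.w M.toFun M.hpush

theorem exists_good : ∀ ℓ : ℕ, Nonempty (GoodModel ℓ) := by
  intro ℓ
  induction ℓ with
  | zero => exact ⟨baseModel⟩
  | succ k ih =>
    obtain ⟨M⟩ := ih
    exact ⟨stepModel M⟩

end KTNA


/-- in a knockout tournament with `n = 2^ℓ` players (`ℓ ≥ 2`) of equal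
strength and the deterministic draw (in round 1 player `2i-1` plays player `2i`, and
in each subsequent round the winners of consecutive pairs of matches of the previous
round play each other), the score vector `S = (S_1,…,S_n)` is negatively
associated. -/
theorem knockout_deterministic_draw_scores_NA (ℓ : ℕ) (hℓ : 2 ≤ ℓ) :
    IsNAfin (tournUnif ℓ) (tournScore ℓ) := by
  obtain ⟨M⟩ := KTNA.exists_good ℓ
  intro A₁ A₂ hd ψ₁ ψ₂ hm₁ hm₂ hb₁ hb₂
  have hrw : ∀ (A : Finset (Fin (2^ℓ))) (ψ : ({i // i ∈ A} → ℝ) → ℝ) (ω : TournOmega ℓ),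
      ψ (fun i => tournScore ℓ ω i.1) = ψ (fun i => M.X (M.toFun ω) i.1) := by
    intro A ψ ω
    congr 1
    funext i
    rw [M.hscore]
  calc Expec (tournUnif ℓ)
        (fun ω => ψ₁ (fun i => tournScore ℓ ω i.1) * ψ₂ (fun i => tournScore ℓ ω i.1))
      = Expec (tournUnif ℓ) (fun ω =>
          (fun a => ψ₁ (fun i => M.X a i.1) * ψ₂ (fun i => M.X a i.1)) (M.toFun ω)) := by
        apply Finset.sum_congr rfl
        intro ω _
        dsimp only
        rw [hrw A₁ ψ₁ ω, hrw A₂ ψ₂ ω]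
    _ = Expec M.w (fun a => ψ₁ (fun i => M.X a i.1) * ψ₂ (fun i => M.X a i.1)) :=
        M.hpush (fun a => ψ₁ (fun i => M.X a i.1) * ψ₂ (fun i => M.X a i.1))
    _ ≤ Expec M.w (fun a => ψ₁ (fun i => M.X a i.1)) *
          Expec M.w (fun a => ψ₂ (fun i => M.X a i.1)) :=
        M.hNA A₁ A₂ hd ψ₁ ψ₂ hm₁ hm₂ hb₁ hb₂
    _ = Expec (tournUnif ℓ) (fun ω => ψ₁ (fun i => tournScore ℓ ω i.1)) *
          Expec (tournUnif ℓ) (fun ω => ψ₂ (fun i => tournScore ℓ ω i.1)) := by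
        rw [← M.hpush (fun a => ψ₁ (fun i => M.X a i.1)),
          ← M.hpush (fun a => ψ₂ (fun i => M.X a i.1))]
        congr 1
        · apply Finset.sum_congr rfl
          intro ω _
          dsimp only
          rw [hrw A₁ ψ₁ ω]
        · apply Finset.sum_congr rfl
          intro ω _
          dsimp only
          rw [hrw A₂ ψ₂ ω]
end
end
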